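/- arXiv:1710.00582 — 4 statements merged into one kernel-verified Lean document; each statement's English description precedes it below -/
import Mathlib

section
/- Let G be a finite soluble group. Then the largest size m(G) of an irredundant (independent) generating set of G equals the number of complemented factors in a chief series of G. -/
open Subgroup
open scoped Classical

/-- A set `s` is an irredundant generating set of the group `G`: it generates `G`
but no proper subset does. -/
def IrredSet {G : Type*} [Group G] (s : Set G) : Prop :=
  Subgroup.closure s = ⊤ ∧ ∀ x ∈ s, Subgroup.closure (s \ {x}) ≠ ⊤

/-- `mIrr G` is the largest size of an irredundant generating set of `G`. -/
noncomputable def mIrr (G : Type*) [Group G] : ℕ :=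
  sSup {n | ∃ s : Set G, s.Finite ∧ s.ncard = n ∧ IrredSet s}

/-- `dGen G` is the smallest size of a generating set of `G`. -/
noncomputable def dGen (G : Type*) [Group G] : ℕ :=
  sInf {n | ∃ s : Set G, s.Finite ∧ s.ncard = n ∧ Subgroup.closure s = ⊤}

/-- A sequence `g : Fin n → G` is an irredundant generating sequence:
it generates `G` but no proper subsequence does. -/
def IrredSeq {G : Type*} [Group G] {n : ℕ} (g : Fin n → G) : Prop :=
  Subgroup.closure (Set.range g) = ⊤ ∧
  ∀ i : Fin n, Subgroup.closure (g '' {i}ᶜ) ≠ ⊤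

/-- `G` satisfies the replacement property: for every irredundant generating
sequence of maximal length `mIrr G` and every nontrivial `x : G`, some entry
can be replaced by `x` so that the sequence still generates. -/
def ReplacementProperty (G : Type*) [Group G] : Prop :=
  ∀ g : Fin (mIrr G) → G, IrredSeq g → ∀ x : G, x ≠ 1 →
    ∃ i, Subgroup.closure (Set.range (Function.update g i x)) = ⊤

/-- The strong replacement property: replacement holds for irredundant
generating sequences of any length. -/
def StrongReplacementProperty (G : Type*) [Group G] : Prop :=
  ∀ (n : ℕ) (g : Fin n → G), IrredSeq g → ∀ x : G, x ≠ 1 →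
    ∃ i, Subgroup.closure (Set.range (Function.update g i x)) = ⊤

/-- `G` is a K-group: its subgroup lattice is complemented. -/
def IsKGroup (G : Type*) [Group G] : Prop :=
  ∀ H : Subgroup G, ∃ X : Subgroup G, H ⊔ X = ⊤ ∧ H ⊓ X = ⊥

/-- `μ` is the Möbius function of the subgroup lattice of `G`. -/
def IsMobius {G : Type*} [Group G] (μ : Subgroup G → ℤ) : Prop :=
  ∀ H : Subgroup G, ∑ᶠ K ∈ {K : Subgroup G | H ≤ K}, μ K = if H = ⊤ then 1 else 0

/-- `B/A` is a chief factor of `G`. -/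
def ChiefFactor {G : Type*} [Group G] (A B : Subgroup G) : Prop :=
  A.Normal ∧ B.Normal ∧ A < B ∧
    ∀ N : Subgroup G, N.Normal → A ≤ N → N ≤ B → N = A ∨ N = B

/-- The factor `B/A` is complemented in `G/A`: there is a subgroup `K ≥ A`
with `K ⊔ B = G` and `K ⊓ B = A`. -/
def ComplementedFactor {G : Type*} [Group G] (A B : Subgroup G) : Prop :=
  ∃ K : Subgroup G, A ≤ K ∧ K ⊔ B = ⊤ ∧ K ⊓ B = A

/-- `c` is a chief series of `G`. -/
def IsChiefSeries {G : Type*} [Group G] {n : ℕ} (c : Fin (n + 1) → Subgroup G) : Prop :=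
  c 0 = ⊥ ∧ c (Fin.last n) = ⊤ ∧ ∀ i : Fin n, ChiefFactor (c i.castSucc) (c i.succ)

/-- `N` is a minimal normal subgroup of `G`. -/
def IsMinimalNormal {G : Type*} [Group G] (N : Subgroup G) : Prop :=
  N.Normal ∧ N ≠ ⊥ ∧ ∀ K : Subgroup G, K.Normal → K ≤ N → K = ⊥ ∨ K = N

/-- `F` is the Fitting subgroup of `G`: the largest nilpotent normal subgroup. -/
def IsFitting {G : Type*} [Group G] (F : Subgroup G) : Prop :=
  F.Normal ∧ Group.IsNilpotent F ∧
    ∀ K : Subgroup G, K.Normal → Group.IsNilpotent K → K ≤ F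


/-! ### Auxiliary development -/

section Aux

open scoped Pointwise

set_option linter.unusedSectionVars false

universe u

variable {G : Type u} [Group G]

/-- Every finite generating set contains an irredundant generating subset. -/
lemma exists_irredSet_subset (s : Set G) (hs : s.Finite) (hgen : Subgroup.closure s = ⊤) :
    ∃ t ⊆ s, t.Finite ∧ IrredSet t := by
  obtain ⟨n, hn⟩ : ∃ n, s.ncard = n := ⟨_, rfl⟩
  induction n using Nat.strong_induction_on generalizing s with
  | _ n ih =>
    by_cases h : ∀ x ∈ s, Subgroup.closure (s \ {x}) ≠ ⊤
    · exact ⟨s, le_refl _, hs, hgen, h⟩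
    · push_neg at h
      obtain ⟨x, hx, hcl⟩ := h
      subst hn
      obtain ⟨t, hts, htf, hti⟩ :=
        ih _ (Set.ncard_diff_singleton_lt_of_mem hx hs) (s \ {x}) hs.diff hcl rfl
      exact ⟨t, hts.trans Set.diff_subset, htf, hti⟩

lemma mIrrSet_bddAbove [Finite G] :
    BddAbove {n | ∃ s : Set G, s.Finite ∧ s.ncard = n ∧ IrredSet s} := by
  refine ⟨Nat.card G, ?_⟩
  rintro n ⟨s, hf, rfl, -⟩
  calc s.ncard ≤ (Set.univ : Set G).ncard :=
        Set.ncard_le_ncard (Set.subset_univ s) Set.finite_univ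
    _ = Nat.card G := Set.ncard_univ G

lemma mIrrSet_nonempty [Finite G] :
    Set.Nonempty {n | ∃ s : Set G, s.Finite ∧ s.ncard = n ∧ IrredSet s} := by
  obtain ⟨t, -, htf, hti⟩ :=
    exists_irredSet_subset (Set.univ : Set G) Set.finite_univ Subgroup.closure_univ
  exact ⟨t.ncard, t, htf, rfl, hti⟩

lemma le_mIrr [Finite G] {s : Set G} (hs : s.Finite) (hi : IrredSet s) :
    s.ncard ≤ mIrr G := by
  have h := le_csSup (mIrrSet_bddAbove (G := G)) (a := s.ncard) ⟨s, hs, rfl, hi⟩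
  exact h

lemma exists_irredSet_card_mIrr (G : Type u) [Group G] [Finite G] :
    ∃ s : Set G, s.Finite ∧ s.ncard = mIrr G ∧ IrredSet s := by
  have h := Nat.sSup_mem (mIrrSet_nonempty (G := G)) (mIrrSet_bddAbove (G := G))
  obtain ⟨s, hf, hcard, hi⟩ := h
  exact ⟨s, hf, hcard, hi⟩

lemma mIrr_of_subsingleton [Subsingleton G] : mIrr G = 0 := by
  have htop : ∀ H : Subgroup G, H = ⊤ := by
    intro H
    ext g
    simp only [Subgroup.mem_top, iff_true]
    have : g = 1 := Subsingleton.elim g 1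
    rw [this]; exact H.one_mem
  have hset : {n | ∃ s : Set G, s.Finite ∧ s.ncard = n ∧ IrredSet s} = {0} := by
    ext n
    constructor
    · rintro ⟨s, hf, rfl, hgen, hirr⟩
      rcases Set.eq_empty_or_nonempty s with rfl | ⟨x, hx⟩
      · simp
      · exact absurd (htop _) (hirr x hx)
    · rintro rfl
      exact ⟨∅, Set.finite_empty, Set.ncard_empty G, htop _, fun x hx => absurd hx (by simp)⟩
  rw [mIrr, hset, csSup_singleton]

section MinNormal

variable (N : Subgroup G) [hNn : N.Normal]

/-- Key generation lemma: adjoining a nontrivial element of the minimal normal abelian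
subgroup `N` to a subgroup `H` with `H ⊔ N = ⊤` generates everything. -/
lemma keygen (hmin : ∀ K : Subgroup G, K.Normal → K ≤ N → K = ⊥ ∨ K = N)
    (habel : ∀ a ∈ N, ∀ b ∈ N, a * b = b * a) (H : Subgroup G) (hH : H ⊔ N = ⊤)
    {x : G} (hx : x ∈ N) (hx1 : x ≠ 1) : H ⊔ Subgroup.closure {x} = ⊤ := by
  set L := H ⊔ Subgroup.closure {x} with hL
  have hxL : x ∈ L := le_sup_right (α := Subgroup G) (Subgroup.subset_closure rfl)
  have hnc : Subgroup.normalClosure {x} = N := by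
    have hle : Subgroup.normalClosure {x} ≤ N :=
      Subgroup.normalClosure_le_normal (by simpa using hx)
    rcases hmin _ (Subgroup.normalClosure_normal) hle with h | h
    · exfalso
      have : x ∈ Subgroup.normalClosure {x} := Subgroup.subset_normalClosure rfl
      rw [h, Subgroup.mem_bot] at this
      exact hx1 this
    · exact h
  have hNle : N ≤ L := by
    rw [← hnc]
    rw [Subgroup.normalClosure]
    apply (Subgroup.closure_le _).mpr
    intro y hy
    rw [Group.mem_conjugatesOfSet_iff] at hy
    obtain ⟨a, ha, hconj⟩ := hy
    rcases Set.mem_singleton_iff.mp ha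
    obtain ⟨cc, hcc⟩ := isConj_iff.mp hconj
    have hcmem : cc ∈ (H : Set G) * (N : Set G) := by
      rw [← Subgroup.mul_normal]
      rw [hH]
      trivial
    obtain ⟨h, hh, ν, hν, rfl⟩ := hcmem
    have hfix : ν * x * ν⁻¹ = x := by
      rw [habel ν hν x hx]
      group
    have : (h * ν) * x * (h * ν)⁻¹ = h * x * h⁻¹ := by
      rw [mul_inv_rev, show h * ν * x * (ν⁻¹ * h⁻¹) = h * (ν * x * ν⁻¹) * h⁻¹ by group, hfix]
    rw [← hcc, this]
    exact mul_mem (mul_mem (le_sup_left (α := Subgroup G) (b := Subgroup.closure {x}) hh) hxL)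
      (inv_mem (le_sup_left (α := Subgroup G) (b := Subgroup.closure {x}) hh))
  apply le_antisymm le_top
  rw [← hH]
  exact sup_le le_sup_left hNle

lemma noncompl_sup [Finite G] (hmin : ∀ K : Subgroup G, K.Normal → K ≤ N → K = ⊥ ∨ K = N)
    (habel : ∀ a ∈ N, ∀ b ∈ N, a * b = b * a) (hnc : ¬ ComplementedFactor ⊥ N)
    (H : Subgroup G) (hH : H ⊔ N = ⊤) : H = ⊤ := by
  haveI : Finite (Subgroup G) :=
    Finite.of_injective (fun K : Subgroup G => (K : Set G)) SetLike.coe_injective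
  rcases eq_top_or_exists_le_coatom H with h | ⟨M, hM, hHM⟩
  · exact h
  exfalso
  have hMN : M ⊔ N = ⊤ := by
    apply le_antisymm le_top
    rw [← hH]
    exact sup_le (le_trans hHM le_sup_left) le_sup_right
  have hMinf : (M ⊓ N).Normal := by
    constructor
    intro y hy g
    have hg : g ∈ (M : Set G) * (N : Set G) := by
      rw [← Subgroup.mul_normal, hMN]; trivial
    obtain ⟨mu, hmu, ν, hν, rfl⟩ := hg
    have hfix : ν * y * ν⁻¹ = y := by rw [habel ν hν y hy.2]; group
    have hrw : (mu * ν) * y * (mu * ν)⁻¹ = mu * y * mu⁻¹ := by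
      rw [mul_inv_rev, show mu * ν * y * (ν⁻¹ * mu⁻¹) = mu * (ν * y * ν⁻¹) * mu⁻¹ by group,
        hfix]
    rw [hrw]
    exact ⟨M.mul_mem (M.mul_mem hmu hy.1) (M.inv_mem hmu),
      hNn.conj_mem y hy.2 mu⟩
  rcases hmin _ hMinf inf_le_right with h | h
  · exact hnc ⟨M, bot_le, hMN, h⟩
  · have hNM : N ≤ M := by rw [← h]; exact inf_le_left
    have : M = ⊤ := by
      rw [← hMN]
      exact (sup_eq_left.mpr hNM).symm
    exact hM.1 this

/-- Core contradiction lemma. -/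
lemma core_contra (hmin : ∀ K : Subgroup G, K.Normal → K ≤ N → K = ⊥ ∨ K = N)
    (habel : ∀ a ∈ N, ∀ b ∈ N, a * b = b * a) {s : Set G} (hi : IrredSet s) {x y : G}
    (hx : x ∈ s) (hy : y ∈ s) (hxy : x ≠ y)
    (h : Subgroup.closure (s \ {x, y}) ⊔ N = ⊤) : False := by
  set H₀ := Subgroup.closure (s \ {x, y}) with hH₀
  have hsub_y : s \ {x, y} ⊆ s \ {y} :=
    Set.diff_subset_diff_right (by simp)
  have hsub_x : s \ {x, y} ⊆ s \ {x} :=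
    Set.diff_subset_diff_right (by simp)
  have hH₀y : H₀ ≤ Subgroup.closure (s \ {y}) := Subgroup.closure_mono hsub_y
  have hH₀x : H₀ ≤ Subgroup.closure (s \ {x}) := Subgroup.closure_mono hsub_x
  have hxmem : x ∈ (H₀ : Set G) * (N : Set G) := by
    rw [← Subgroup.mul_normal, h]; trivial
  obtain ⟨a, ha, m, hm, ham⟩ := hxmem
  have hx_y : x ∈ Subgroup.closure (s \ {y}) :=
    Subgroup.subset_closure ⟨hx, by simpa using hxy⟩
  have hm_y : m ∈ Subgroup.closure (s \ {y}) := by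
    have : m = a⁻¹ * x := by rw [← ham]; group
    rw [this]
    exact mul_mem (inv_mem (hH₀y ha)) hx_y
  by_cases hm1 : m = 1
  · have hxH₀ : x ∈ H₀ := by rw [← ham, hm1]; simpa using ha
    have hymem : y ∈ (H₀ : Set G) * (N : Set G) := by
      rw [← Subgroup.mul_normal, h]; trivial
    obtain ⟨b, hb, m', hm', hbm'⟩ := hymem
    have hy_x : y ∈ Subgroup.closure (s \ {x}) :=
      Subgroup.subset_closure ⟨hy, by simpa using hxy.symm⟩
    have hm'_x : m' ∈ Subgroup.closure (s \ {x}) := by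
      have : m' = b⁻¹ * y := by rw [← hbm']; group
      rw [this]
      exact mul_mem (inv_mem (hH₀x hb)) hy_x
    by_cases hm'1 : m' = 1
    · have hyH₀ : y ∈ H₀ := by rw [← hbm', hm'1]; simpa using hb
      have hcl : Subgroup.closure s ≤ H₀ := by
        apply (Subgroup.closure_le _).mpr
        intro z hz
        by_cases hzx : z = x
        · rw [hzx]; exact hxH₀
        by_cases hzy : z = y
        · rw [hzy]; exact hyH₀
        · exact Subgroup.subset_closure ⟨hz, by simp [hzx, hzy]⟩
      rw [hi.1] at hcl
      exact hi.2 x hx (top_unique (le_trans hcl hH₀x))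
    · have htop := keygen N hmin habel H₀ h hm' hm'1
      refine hi.2 x hx (top_unique ?_)
      rw [← htop]
      exact sup_le hH₀x ((Subgroup.closure_le _).mpr (by simpa using hm'_x))
  · have htop := keygen N hmin habel H₀ h hm hm1
    refine hi.2 y hy (top_unique ?_)
    rw [← htop]
    exact sup_le hH₀y ((Subgroup.closure_le _).mpr (by simpa using hm_y))

end MinNormal

section QuotientLemmas

variable (N : Subgroup G) [hNn : N.Normal]

local notation "π" => QuotientGroup.mk' N

lemma mem_of_mk'_eq {a g : G} (h : QuotientGroup.mk' N a = QuotientGroup.mk' N g) :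
    a⁻¹ * g ∈ N := by
  have h1 : (QuotientGroup.mk' N) (a⁻¹ * g) = 1 := by
    rw [map_mul, map_inv, h]
    group
  exact (QuotientGroup.eq_one_iff _).mp (by simpa using h1)

lemma map_mk'_eq_top_iff (H : Subgroup G) :
    Subgroup.map (QuotientGroup.mk' N) H = ⊤ ↔ H ⊔ N = ⊤ := by
  constructor
  · intro h
    have := congrArg (Subgroup.comap (QuotientGroup.mk' N)) h
    rw [Subgroup.comap_map_eq, QuotientGroup.ker_mk'] at this
    rw [this]
    exact Subgroup.comap_top _
  · intro h
    have hmapN : Subgroup.map (QuotientGroup.mk' N) N = ⊥ := by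
      apply le_bot_iff.mp
      rintro q ⟨n, hn, rfl⟩
      simpa [Subgroup.mem_bot] using (QuotientGroup.eq_one_iff n).mpr hn
    have h2 : Subgroup.map (QuotientGroup.mk' N) (H ⊔ N) = ⊤ := by
      rw [h, Subgroup.map_top_of_surjective _ (QuotientGroup.mk'_surjective N)]
    rw [Subgroup.map_sup, hmapN, sup_bot_eq] at h2
    exact h2

lemma chiefFactor_map {A B : Subgroup G} (hNA : N ≤ A) (h : ChiefFactor A B) :
    ChiefFactor (Subgroup.map (QuotientGroup.mk' N) A)
      (Subgroup.map (QuotientGroup.mk' N) B) := by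
  obtain ⟨hAn, hBn, hAB, hmax⟩ := h
  have hsurj := QuotientGroup.mk'_surjective N
  have hker : (QuotientGroup.mk' N).ker = N := QuotientGroup.ker_mk' N
  have hNB : N ≤ B := hNA.trans hAB.le
  have hcmA : Subgroup.comap (QuotientGroup.mk' N) (Subgroup.map (QuotientGroup.mk' N) A) = A :=
    Subgroup.comap_map_eq_self (by rw [hker]; exact hNA)
  have hcmB : Subgroup.comap (QuotientGroup.mk' N) (Subgroup.map (QuotientGroup.mk' N) B) = B :=
    Subgroup.comap_map_eq_self (by rw [hker]; exact hNB)
  refine ⟨hAn.map _ hsurj, hBn.map _ hsurj, ?_, ?_⟩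
  · refine lt_of_le_of_ne (Subgroup.map_mono hAB.le) ?_
    intro heq
    have := congrArg (Subgroup.comap (QuotientGroup.mk' N)) heq
    rw [hcmA, hcmB] at this
    exact hAB.ne this
  · intro N' hN' hle1 hle2
    have hK : (Subgroup.comap (QuotientGroup.mk' N) N').Normal := hN'.comap _
    have hA_le : A ≤ Subgroup.comap (QuotientGroup.mk' N) N' := by
      rw [← hcmA]
      exact Subgroup.comap_mono hle1
    have h_le_B : Subgroup.comap (QuotientGroup.mk' N) N' ≤ B := by
      rw [← hcmB]
      exact Subgroup.comap_mono hle2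
    have hmc : Subgroup.map (QuotientGroup.mk' N) (Subgroup.comap (QuotientGroup.mk' N) N')
        = N' := Subgroup.map_comap_eq_self_of_surjective hsurj N'
    rcases hmax _ hK hA_le h_le_B with hh | hh
    · left; rw [← hmc, hh]
    · right; rw [← hmc, hh]

lemma complementedFactor_map_iff {A B : Subgroup G} (hNA : N ≤ A) (hAB : A ≤ B) :
    ComplementedFactor (Subgroup.map (QuotientGroup.mk' N) A)
        (Subgroup.map (QuotientGroup.mk' N) B) ↔ ComplementedFactor A B := by
  have hsurj := QuotientGroup.mk'_surjective N
  have hker : (QuotientGroup.mk' N).ker = N := QuotientGroup.ker_mk' N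
  have hNB : N ≤ B := hNA.trans hAB
  constructor
  · rintro ⟨K', hK'1, hK'2, hK'3⟩
    refine ⟨Subgroup.comap (QuotientGroup.mk' N) K', ?_, ?_, ?_⟩
    · exact Subgroup.map_le_iff_le_comap.mp hK'1
    · have hNle : N ≤ Subgroup.comap (QuotientGroup.mk' N) K' ⊔ B :=
        le_trans (le_trans hNA (Subgroup.map_le_iff_le_comap.mp hK'1)) le_sup_left
      have : Subgroup.map (QuotientGroup.mk' N)
          (Subgroup.comap (QuotientGroup.mk' N) K' ⊔ B) = ⊤ := by
        rw [Subgroup.map_sup, Subgroup.map_comap_eq_self_of_surjective hsurj, hK'2]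
      have h2 := congrArg (Subgroup.comap (QuotientGroup.mk' N)) this
      rw [Subgroup.comap_map_eq_self (by rw [hker]; exact hNle), Subgroup.comap_top] at h2
      exact h2
    · apply le_antisymm
      · rintro g ⟨hgK, hgB⟩
        have hq : (QuotientGroup.mk' N) g ∈ K' ⊓ Subgroup.map (QuotientGroup.mk' N) B :=
          ⟨hgK, ⟨g, hgB, rfl⟩⟩
        rw [hK'3] at hq
        obtain ⟨a, haA, haq⟩ := hq
        have hmemN : a⁻¹ * g ∈ N := mem_of_mk'_eq N haq
        have hg : g = a * (a⁻¹ * g) := by group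
        rw [hg]
        exact A.mul_mem haA (hNA hmemN)
      · exact le_inf (Subgroup.map_le_iff_le_comap.mp hK'1) hAB
  · rintro ⟨K, hAK, hsup, hinf⟩
    refine ⟨Subgroup.map (QuotientGroup.mk' N) K, Subgroup.map_mono hAK, ?_, ?_⟩
    · rw [← Subgroup.map_sup, hsup, Subgroup.map_top_of_surjective _ hsurj]
    · apply le_antisymm
      · rintro q ⟨⟨k, hk, hkq⟩, ⟨b, hb, hbq⟩⟩
        have : k⁻¹ * b ∈ N := mem_of_mk'_eq N (hkq.trans hbq.symm)
        have hkB : k ∈ B := by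
          have hkb : k = b * (k⁻¹ * b)⁻¹ := by group
          rw [hkb]
          exact B.mul_mem hb (B.inv_mem (hNB this))
        have : k ∈ A := by rw [← hinf]; exact ⟨hk, hkB⟩
        exact ⟨k, this, hkq⟩
      · exact le_inf (Subgroup.map_mono hAK) (Subgroup.map_mono hAB)

lemma closure_image_top_iff (u : Set G) :
    Subgroup.closure ((QuotientGroup.mk' N) '' u) = ⊤ ↔ Subgroup.closure u ⊔ N = ⊤ := by
  rw [← MonoidHom.map_closure, map_mk'_eq_top_iff]

lemma closure_image_of_closure_top (u : Set G) (hu : Subgroup.closure u = ⊤) :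
    Subgroup.closure ((QuotientGroup.mk' N) '' u) = ⊤ := by
  rw [← MonoidHom.map_closure, hu,
    Subgroup.map_top_of_surjective _ (QuotientGroup.mk'_surjective N)]

end QuotientLemmas

section UpDown

variable [Finite G] (N : Subgroup G) [hNn : N.Normal]

lemma mIrr_le_quot_add_one (hNbot : N ≠ ⊥)
    (hmin : ∀ K : Subgroup G, K.Normal → K ≤ N → K = ⊥ ∨ K = N)
    (habel : ∀ a ∈ N, ∀ b ∈ N, a * b = b * a) : mIrr G ≤ mIrr (G ⧸ N) + 1 := by
  obtain ⟨s, hsf, hscard, hsi⟩ := exists_irredSet_card_mIrr G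
  by_cases hA : ∃ x ∈ s, Subgroup.closure ((QuotientGroup.mk' N) '' (s \ {x})) = ⊤
  · obtain ⟨x, hx, hxt⟩ := hA
    set t := (QuotientGroup.mk' N) '' (s \ {x}) with ht
    have hcore : ∀ y ∈ s, y ≠ x →
        Subgroup.closure ((QuotientGroup.mk' N) '' (s \ {x, y})) ≠ ⊤ := by
      intro y hy hyx hcl
      exact core_contra N hmin habel hsi hx hy (Ne.symm hyx)
        ((closure_image_top_iff N _).mp hcl)
    have hinj : Set.InjOn (QuotientGroup.mk' N) (s \ {x}) := by
      intro a ha b hb hab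
      by_contra hne
      have hba : b ≠ a := fun h => hne h.symm
      have hbx : b ≠ x := fun h => hb.2 (by simp [h])
      apply hcore a ha.1 (by simpa using ha.2)
      apply top_unique
      rw [← hxt]
      apply Subgroup.closure_mono
      rintro - ⟨z, hz, rfl⟩
      have hzx : z ≠ x := fun h => hz.2 (by simp [h])
      by_cases hza : z = a
      · exact ⟨b, ⟨hb.1, by simp [hbx, hba]⟩, by rw [hza, hab]⟩
      · exact ⟨z, ⟨hz.1, by simp [hzx, hza]⟩, rfl⟩
    have hti : IrredSet t := by
      refine ⟨hxt, ?_⟩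
      rintro - ⟨y, hy, rfl⟩ hcl
      apply hcore y hy.1 (by simpa using hy.2)
      apply top_unique
      rw [← hcl]
      apply Subgroup.closure_mono
      rintro - ⟨⟨z, hz, rfl⟩, hz2⟩
      have hzy : z ≠ y := fun h => hz2 (by rw [Set.mem_singleton_iff, h])
      have hzx : z ≠ x := fun h => hz.2 (by simp [h])
      exact ⟨z, ⟨hz.1, by simp [hzx, hzy]⟩, rfl⟩
    have hcard : t.ncard = mIrr G - 1 := by
      rw [Set.ncard_image_of_injOn hinj, Set.ncard_diff_singleton_of_mem hx, hscard]
    have hle := le_mIrr (G := G ⧸ N) (hsf.diff.image _) hti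
    rw [hcard] at hle
    exact Nat.sub_le_iff_le_add.mp hle
  · push_neg at hA
    set t := (QuotientGroup.mk' N) '' s with ht
    have hinj : Set.InjOn (QuotientGroup.mk' N) s := by
      intro a ha b hb hab
      by_contra hne
      have hba : b ≠ a := fun h => hne h.symm
      apply hA a ha
      apply top_unique
      rw [← closure_image_of_closure_top N s hsi.1]
      apply Subgroup.closure_mono
      rintro - ⟨z, hz, rfl⟩
      by_cases hza : z = a
      · exact ⟨b, ⟨hb, by simp [hba]⟩, by rw [hza, hab]⟩
      · exact ⟨z, ⟨hz, by simp [hza]⟩, rfl⟩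
    have hti : IrredSet t := by
      refine ⟨closure_image_of_closure_top N s hsi.1, ?_⟩
      rintro - ⟨y, hy, rfl⟩ hcl
      apply hA y hy
      apply top_unique
      rw [← hcl]
      apply Subgroup.closure_mono
      rintro - ⟨⟨z, hz, rfl⟩, hz2⟩
      have hzy : z ≠ y := fun h => hz2 (by rw [Set.mem_singleton_iff, h])
      exact ⟨z, ⟨hz, by simp [hzy]⟩, rfl⟩
    have hle := le_mIrr (G := G ⧸ N) (hsf.image _) hti
    rw [Set.ncard_image_of_injOn hinj, hscard] at hle
    exact le_trans hle (Nat.le_succ _)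

lemma mIrr_le_quot (hNbot : N ≠ ⊥)
    (hmin : ∀ K : Subgroup G, K.Normal → K ≤ N → K = ⊥ ∨ K = N)
    (habel : ∀ a ∈ N, ∀ b ∈ N, a * b = b * a) (hnc : ¬ ComplementedFactor ⊥ N) : mIrr G ≤ mIrr (G ⧸ N) := by
  obtain ⟨s, hsf, hscard, hsi⟩ := exists_irredSet_card_mIrr G
  by_cases hA : ∃ x ∈ s, Subgroup.closure ((QuotientGroup.mk' N) '' (s \ {x})) = ⊤
  · exfalso
    obtain ⟨x, hx, hxt⟩ := hA
    have h1 : Subgroup.closure (s \ {x}) ⊔ N = ⊤ := (closure_image_top_iff N _).mp hxt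
    exact hsi.2 x hx (noncompl_sup N hmin habel hnc _ h1)
  · push_neg at hA
    set t := (QuotientGroup.mk' N) '' s with ht
    have hinj : Set.InjOn (QuotientGroup.mk' N) s := by
      intro a ha b hb hab
      by_contra hne
      have hba : b ≠ a := fun h => hne h.symm
      apply hA a ha
      apply top_unique
      rw [← closure_image_of_closure_top N s hsi.1]
      apply Subgroup.closure_mono
      rintro - ⟨z, hz, rfl⟩
      by_cases hza : z = a
      · exact ⟨b, ⟨hb, by simp [hba]⟩, by rw [hza, hab]⟩
      · exact ⟨z, ⟨hz, by simp [hza]⟩, rfl⟩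
    have hti : IrredSet t := by
      refine ⟨closure_image_of_closure_top N s hsi.1, ?_⟩
      rintro - ⟨y, hy, rfl⟩ hcl
      apply hA y hy
      apply top_unique
      rw [← hcl]
      apply Subgroup.closure_mono
      rintro - ⟨⟨z, hz, rfl⟩, hz2⟩
      have hzy : z ≠ y := fun h => hz2 (by rw [Set.mem_singleton_iff, h])
      exact ⟨z, ⟨hz, by simp [hzy]⟩, rfl⟩
    have hle := le_mIrr (G := G ⧸ N) (hsf.image _) hti
    rwa [Set.ncard_image_of_injOn hinj, hscard] at hle

lemma quot_le_mIrr (hNbot : N ≠ ⊥)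
    (hmin : ∀ K : Subgroup G, K.Normal → K ≤ N → K = ⊥ ∨ K = N)
    (habel : ∀ a ∈ N, ∀ b ∈ N, a * b = b * a) (hnc : ¬ ComplementedFactor ⊥ N) : mIrr (G ⧸ N) ≤ mIrr G := by
  obtain ⟨t, htf, htcard, hti⟩ := exists_irredSet_card_mIrr (G ⧸ N)
  set σ := Function.surjInv (QuotientGroup.mk'_surjective N) with hσdef
  have hσπ : ∀ q, (QuotientGroup.mk' N) (σ q) = q :=
    fun q => Function.surjInv_eq (QuotientGroup.mk'_surjective N) q
  have hσinj : Function.Injective σ := by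
    intro a b hab
    rw [← hσπ a, ← hσπ b, hab]
  set s := σ '' t with hs
  have himg : (QuotientGroup.mk' N) '' s = t := by
    rw [hs, Set.image_image]
    simpa [hσπ] using Set.image_id t
  have hgen : Subgroup.closure s = ⊤ := by
    apply noncompl_sup N hmin habel hnc
    rw [← closure_image_top_iff, himg, hti.1]
  have hirr : IrredSet s := by
    refine ⟨hgen, ?_⟩
    rintro - ⟨y', hy', rfl⟩ hcl
    apply hti.2 y' hy'
    apply top_unique
    have h2 := closure_image_of_closure_top N _ hcl
    rw [← h2]
    apply Subgroup.closure_mono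
    rintro - ⟨z, hz, rfl⟩
    obtain ⟨w, hw, rfl⟩ := hz.1
    rw [hσπ]
    refine ⟨hw, ?_⟩
    intro hww
    rw [Set.mem_singleton_iff] at hww
    exact hz.2 (by rw [Set.mem_singleton_iff, hww])
  have hle := le_mIrr (htf.image _) hirr
  rwa [Set.ncard_image_of_injOn (hσinj.injOn), htcard] at hle

lemma quot_add_one_le_mIrr (hNbot : N ≠ ⊥)
    (hmin : ∀ K : Subgroup G, K.Normal → K ≤ N → K = ⊥ ∨ K = N)
    (habel : ∀ a ∈ N, ∀ b ∈ N, a * b = b * a) (hcomp : ComplementedFactor ⊥ N) :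
    mIrr (G ⧸ N) + 1 ≤ mIrr G := by
  obtain ⟨K, -, hK2, hK3⟩ := hcomp
  obtain ⟨t, htf, htcard, hti⟩ := exists_irredSet_card_mIrr (G ⧸ N)
  have hσex : ∀ q : G ⧸ N, ∃ k, k ∈ K ∧ (QuotientGroup.mk' N) k = q := by
    intro q
    have : q ∈ Subgroup.map (QuotientGroup.mk' N) K := by
      rw [(map_mk'_eq_top_iff N K).mpr hK2]
      trivial
    obtain ⟨k, hk, hkq⟩ := this
    exact ⟨k, hk, hkq⟩
  choose σ hσK hσπ using hσex
  have hσinj : Function.Injective σ := by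
    intro a b hab
    rw [← hσπ a, ← hσπ b, hab]
  obtain ⟨x, hxN, hx1⟩ : ∃ x ∈ N, x ≠ 1 := by
    by_contra hcon
    push_neg at hcon
    exact hNbot (Subgroup.eq_bot_iff_forall N |>.mpr hcon)
  have hxK : x ∉ K := by
    intro hxK
    have : x ∈ K ⊓ N := ⟨hxK, hxN⟩
    rw [hK3, Subgroup.mem_bot] at this
    exact hx1 this
  set s₀ := σ '' t with hs₀
  have hxs₀ : x ∉ s₀ := by
    rintro ⟨y', hy', rfl⟩
    exact hxK (hσK y')
  have himg : (QuotientGroup.mk' N) '' s₀ = t := by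
    rw [hs₀, Set.image_image]
    simpa [hσπ] using Set.image_id t
  set s := insert x s₀ with hs
  have hs₀K : Subgroup.closure s₀ ≤ K :=
    (Subgroup.closure_le _).mpr (by rintro - ⟨y', hy', rfl⟩; exact hσK y')
  have hsupN : Subgroup.closure s₀ ⊔ N = ⊤ := by
    rw [← closure_image_top_iff, himg, hti.1]
  have hgen : Subgroup.closure s = ⊤ := by
    have hkey := keygen N hmin habel _ hsupN hxN hx1
    apply top_unique
    rw [← hkey]
    apply sup_le
    · exact Subgroup.closure_mono (Set.subset_insert x s₀)
    · apply (Subgroup.closure_le _).mpr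
      intro z hz
      rw [Set.mem_singleton_iff] at hz
      subst hz
      exact Subgroup.subset_closure (Set.mem_insert z s₀)
  have hKtop : K ≠ ⊤ := by
    intro hKt
    apply hNbot
    rw [← hK3, hKt]
    exact (top_inf_eq N).symm
  have hirr : IrredSet s := by
    refine ⟨hgen, ?_⟩
    intro z hz hcl
    rcases hz with rfl | hz₀
    · rw [Set.insert_diff_self_of_notMem hxs₀] at hcl
      exact hKtop (top_unique (hcl ▸ hs₀K))
    · obtain ⟨y', hy', rfl⟩ := hz₀
      apply hti.2 y' hy'
      have h2 := closure_image_of_closure_top N _ hcl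
      have hsubset : (QuotientGroup.mk' N) '' (s \ {σ y'}) ⊆ insert 1 (t \ {y'}) := by
        rintro - ⟨z, hz, rfl⟩
        rcases hz.1 with rfl | hz₀
        · apply Set.mem_insert_iff.mpr
          left
          have : (z : G ⧸ N) = 1 := (QuotientGroup.eq_one_iff z).mpr hxN
          simpa using this
        · obtain ⟨w', hw', rfl⟩ := hz₀
          apply Set.mem_insert_iff.mpr
          right
          rw [hσπ]
          refine ⟨hw', fun hww => hz.2 ?_⟩
          rw [Set.mem_singleton_iff] at hww
          rw [Set.mem_singleton_iff, hww]
      have h3 : Subgroup.closure (insert 1 (t \ {y'})) = ⊤ :=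
        top_unique (h2 ▸ Subgroup.closure_mono hsubset)
      rw [Set.insert_eq, Subgroup.closure_union, Subgroup.closure_singleton_one,
        bot_sup_eq] at h3
      exact h3
  have hle := le_mIrr ((htf.image _).insert x) hirr
  rw [Set.ncard_insert_of_notMem hxs₀ (htf.image _), Set.ncard_image_of_injOn hσinj.injOn,
    htcard] at hle
  exact hle

lemma mIrr_eq_quot (hNbot : N ≠ ⊥)
    (hmin : ∀ K : Subgroup G, K.Normal → K ≤ N → K = ⊥ ∨ K = N)
    (habel : ∀ a ∈ N, ∀ b ∈ N, a * b = b * a) (hnc : ¬ ComplementedFactor ⊥ N) : mIrr G = mIrr (G ⧸ N) :=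
  le_antisymm (mIrr_le_quot N hNbot hmin habel hnc) (quot_le_mIrr N hNbot hmin habel hnc)

lemma mIrr_eq_quot_add_one (hNbot : N ≠ ⊥)
    (hmin : ∀ K : Subgroup G, K.Normal → K ≤ N → K = ⊥ ∨ K = N)
    (habel : ∀ a ∈ N, ∀ b ∈ N, a * b = b * a) (hcomp : ComplementedFactor ⊥ N) :
    mIrr G = mIrr (G ⧸ N) + 1 :=
  le_antisymm (mIrr_le_quot_add_one N hNbot hmin habel)
    (quot_add_one_le_mIrr N hNbot hmin habel hcomp)

end UpDown

/-- A minimal normal subgroup of a solvable group is abelian. -/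
lemma minNormal_abelian [Group.IsSolvable G] (N : Subgroup G) [hNn : N.Normal] (hNbot : N ≠ ⊥)
    (hmin : ∀ K : Subgroup G, K.Normal → K ≤ N → K = ⊥ ∨ K = N) :
    ∀ a ∈ N, ∀ b ∈ N, a * b = b * a := by
  have hD : (⁅N, N⁆ : Subgroup G).Normal := Subgroup.commutator_normal N N
  have hDle : (⁅N, N⁆ : Subgroup G) ≤ N := Subgroup.commutator_le_right N N
  rcases hmin _ hD hDle with h | h
  · intro a ha b hb
    open scoped commutatorElement in
    have : ⁅a, b⁆ ∈ (⁅N, N⁆ : Subgroup G) := Subgroup.commutator_mem_commutator ha hb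
    rw [h, Subgroup.mem_bot] at this
    have := commutatorElement_eq_one_iff_commute.mp this
    exact this
  · exfalso
    -- the subgroup N, as a group, would be perfect, contradicting solvability
    have hperfect : (⁅(⊤ : Subgroup N), (⊤ : Subgroup N)⁆ : Subgroup N) = ⊤ := by
      apply Subgroup.map_injective N.subtype_injective
      rw [Subgroup.map_commutator]
      have hmt : Subgroup.map N.subtype (⊤ : Subgroup N) = N := by
        rw [← MonoidHom.range_eq_map, Subgroup.range_subtype]
      rw [hmt, h]
    obtain ⟨x, hxN, hx1⟩ : ∃ x ∈ N, x ≠ 1 := by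
      by_contra hc
      push_neg at hc
      exact hNbot (Subgroup.eq_bot_iff_forall N |>.mpr hc)
    have hds : ∀ k : ℕ, derivedSeries N k = ⊤ := by
      intro k
      induction k with
      | zero => rfl
      | succ k ihk => rw [derivedSeries_succ, ihk]; exact hperfect
    exact not_solvable_of_mem_derivedSeries (g := (⟨x, hxN⟩ : N))
      (by simpa using hx1) (fun k => by rw [hds k]; trivial) inferInstance

lemma card_subtype_fin_succ {m : ℕ} (P : Fin (m + 1) → Prop) :
    Nat.card {j : Fin (m + 1) // P j}
      = (if P 0 then 1 else 0) + Nat.card {j : Fin m // P j.succ} := by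
  classical
  rw [Nat.card_eq_fintype_card, Nat.card_eq_fintype_card, Fintype.card_subtype,
    Fintype.card_subtype]
  rw [Finset.card_filter, Finset.card_filter, Fin.sum_univ_succ]

theorem mIrr_aux (n : ℕ) :
    ∀ (G : Type u) [Group G] [Finite G] [Group.IsSolvable G] (c : Fin (n + 1) → Subgroup G),
      IsChiefSeries c →
      mIrr G = Nat.card {i : Fin n // ComplementedFactor (c i.castSucc) (c i.succ)} := by
  induction n with
  | zero =>
    intro G _ _ _ c hc
    have hbt : (⊥ : Subgroup G) = ⊤ := by
      rw [← hc.1, ← hc.2.1]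
      rfl
    haveI : Subsingleton G := by
      constructor
      intro a b
      have ha : a ∈ (⊥ : Subgroup G) := by rw [hbt]; trivial
      have hb : b ∈ (⊥ : Subgroup G) := by rw [hbt]; trivial
      rw [Subgroup.mem_bot] at ha hb
      rw [ha, hb]
    haveI : IsEmpty {i : Fin 0 // ComplementedFactor (c i.castSucc) (c i.succ)} :=
      ⟨fun ⟨i, _⟩ => i.elim0⟩
    rw [mIrr_of_subsingleton, Nat.card_of_isEmpty]
  | succ m ih =>
    intro G _ _ _ c hc
    have hstrict : StrictMono c := Fin.strictMono_iff_lt_succ.mpr (fun i => (hc.2.2 i).2.2.1)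
    have hmono : Monotone c := hstrict.monotone
    have hsucc0 : ((0 : Fin (m + 1)).succ : Fin (m + 2)) = 1 := rfl
    have hCF0 : ChiefFactor (⊥ : Subgroup G) (c 1) := by
      have h := hc.2.2 0
      rw [Fin.castSucc_zero, hc.1, hsucc0] at h
      exact h
    obtain ⟨-, hNn, hbotN, hmax⟩ := hCF0
    haveI := hNn
    have hNbot : c 1 ≠ ⊥ := hbotN.ne'
    have hmin : ∀ K : Subgroup G, K.Normal → K ≤ c 1 → K = ⊥ ∨ K = c 1 :=
      fun K hK hKle => hmax K hK bot_le hKle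
    have habel := minNormal_abelian (c 1) hNbot hmin
    have hmapN : Subgroup.map (QuotientGroup.mk' (c 1)) (c 1) = ⊥ := by
      apply le_bot_iff.mp
      rintro q ⟨g, hg, rfl⟩
      simpa [Subgroup.mem_bot] using (QuotientGroup.eq_one_iff g).mpr hg
    set c' : Fin (m + 1) → Subgroup (G ⧸ (c 1)) :=
      fun j => Subgroup.map (QuotientGroup.mk' (c 1)) (c j.succ) with hc'
    have hle1 : ∀ j : Fin m, (1 : Fin (m + 2)) ≤ j.succ.castSucc := by
      intro j
      rw [Fin.le_def]
      simp
    have hc'series : IsChiefSeries c' := by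
      refine ⟨?_, ?_, ?_⟩
      · show Subgroup.map (QuotientGroup.mk' (c 1)) (c (0 : Fin (m+1)).succ) = ⊥
        rw [hsucc0, hmapN]
      · show Subgroup.map (QuotientGroup.mk' (c 1)) (c (Fin.last m).succ) = ⊤
        rw [Fin.succ_last, hc.2.1]
        exact Subgroup.map_top_of_surjective _ (QuotientGroup.mk'_surjective _)
      · intro j
        show ChiefFactor (Subgroup.map (QuotientGroup.mk' (c 1)) (c j.castSucc.succ))
          (Subgroup.map (QuotientGroup.mk' (c 1)) (c j.succ.succ))
        rw [Fin.succ_castSucc]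
        exact chiefFactor_map (c 1) (hmono (hle1 j)) (hc.2.2 j.succ)
    have hQ := ih (G ⧸ (c 1)) c' hc'series
    have htrans : ∀ j : Fin m,
        ComplementedFactor (c' j.castSucc) (c' j.succ)
          ↔ ComplementedFactor (c j.succ.castSucc) (c j.succ.succ) := by
      intro j
      show ComplementedFactor (Subgroup.map (QuotientGroup.mk' (c 1)) (c j.castSucc.succ))
          (Subgroup.map (QuotientGroup.mk' (c 1)) (c j.succ.succ))
        ↔ ComplementedFactor (c j.succ.castSucc) (c j.succ.succ)
      rw [Fin.succ_castSucc]
      exact complementedFactor_map_iff (c 1) (hmono (hle1 j))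
        (hmono (Fin.castSucc_lt_succ (i := j.succ)).le)
    have hcount2 : Nat.card {j : Fin m //
          ComplementedFactor (c j.succ.castSucc) (c j.succ.succ)}
        = Nat.card {j : Fin m // ComplementedFactor (c' j.castSucc) (c' j.succ)} :=
      Nat.card_congr (Equiv.subtypeEquivRight (fun j => (htrans j).symm))
    have hP0 : ComplementedFactor (c (0 : Fin (m+1)).castSucc) (c (0 : Fin (m+1)).succ)
        ↔ ComplementedFactor ⊥ (c 1) := by
      rw [Fin.castSucc_zero, hc.1, hsucc0]
    rw [card_subtype_fin_succ (P := fun i : Fin (m + 1) =>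
      ComplementedFactor (c i.castSucc) (c i.succ))]
    by_cases hcomp : ComplementedFactor ⊥ (c 1)
    · rw [if_pos (hP0.mpr hcomp)]
      rw [mIrr_eq_quot_add_one (c 1) hNbot hmin habel hcomp, hQ, ← hcount2]
      omega
    · rw [if_neg (fun h => hcomp (hP0.mp h))]
      rw [mIrr_eq_quot (c 1) hNbot hmin habel hcomp, hQ, ← hcount2]
      omega

end Aux

theorem mIrr_eq_card_complemented_chief_factors
    (G : Type*) [Group G] [Finite G] [Group.IsSolvable G] {n : ℕ}
    (c : Fin (n + 1) → Subgroup G) (hc : IsChiefSeries c) :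
    mIrr G = Nat.card {i : Fin n // ComplementedFactor (c i.castSucc) (c i.succ)} := by
  exact mIrr_aux n G c hc
end

section
/- Let G be a finite soluble group. If G is a K-group (i.e., its subgroup lattice is complemented), then G satisfies the replacement property: for every irredundant generating sequence {g_1,...,g_m} of size m = m(G) and for every nontrivial element g of G, there is an index i such that {g_1,...,g_{i-1},g,g_{i+1},...,g_m} generates G. -/
open Subgroup
open scoped Classical

section Helpers

variable {G : Type*} [Group G]

lemma range_update {n : ℕ} (g : Fin n → G) (i : Fin n) (x : G) :
    Set.range (Function.update g i x) = insert x (g '' {i}ᶜ) := by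
  ext y
  constructor
  · rintro ⟨k, rfl⟩
    by_cases hk : k = i
    · subst hk; left; simp [Function.update]
    · right; exact ⟨k, hk, (Function.update_of_ne hk x g).symm⟩
  · rintro (rfl | ⟨k, hk, rfl⟩)
    · exact ⟨i, Function.update_self i y g⟩
    · exact ⟨k, Function.update_of_ne hk x g⟩

lemma succAbove_image_compl {n : ℕ} (j : Fin (n + 1)) (i' : Fin n) :
    j.succAbove '' {i'}ᶜ = {j.succAbove i'}ᶜ ∩ {j}ᶜ := by
  ext k
  constructor
  · rintro ⟨l, hl, rfl⟩
    exact ⟨fun h => hl (j.succAbove_right_injective h), j.succAbove_ne l⟩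
  · rintro ⟨h1, h2⟩
    obtain ⟨l, rfl⟩ := Fin.exists_succAbove_eq (show k ≠ j from h2)
    exact ⟨l, fun h => h1 (Set.mem_singleton_iff.mpr
      (congrArg j.succAbove (Set.mem_singleton_iff.mp h))), rfl⟩

lemma mIrr_bddAbove (G : Type*) [Group G] [Finite G] :
    BddAbove {n | ∃ s : Set G, s.Finite ∧ s.ncard = n ∧ IrredSet s} := by
  refine ⟨Nat.card G, ?_⟩
  rintro n ⟨s, hfin, rfl, _⟩
  calc s.ncard ≤ (Set.univ : Set G).ncard :=
        Set.ncard_le_ncard (Set.subset_univ s) (Set.toFinite _)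
    _ = Nat.card G := Set.ncard_univ G

lemma exists_irredSet_subset_s1 [Finite G] :
    ∀ (n : ℕ) (s : Set G), s.ncard ≤ n → Subgroup.closure s = ⊤ →
      ∃ t ⊆ s, IrredSet t := by
  intro n
  induction n with
  | zero =>
    intro s hcard hs
    refine ⟨s, le_refl s, hs, ?_⟩
    intro x hx
    have : s.ncard = 0 := Nat.le_zero.mp hcard
    have : s = ∅ := (Set.ncard_eq_zero (Set.toFinite s)).mp this
    simp [this] at hx
  | succ n ih =>
    intro s hcard hs
    by_cases h : ∀ x ∈ s, Subgroup.closure (s \ {x}) ≠ ⊤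
    · exact ⟨s, le_refl s, hs, h⟩
    · push_neg at h
      obtain ⟨x, hx, htop⟩ := h
      have hlt : (s \ {x}).ncard < s.ncard :=
        Set.ncard_diff_singleton_lt_of_mem hx (Set.toFinite s)
      obtain ⟨t, hts, ht⟩ := ih (s \ {x}) (by omega) htop
      exact ⟨t, hts.trans Set.diff_subset, ht⟩

lemma mIrr_mem (G : Type*) [Group G] [Finite G] :
    ∃ s : Set G, s.Finite ∧ s.ncard = mIrr G ∧ IrredSet s := by
  have hne : {n | ∃ s : Set G, s.Finite ∧ s.ncard = n ∧ IrredSet s}.Nonempty := by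
    obtain ⟨t, _, ht⟩ := exists_irredSet_subset_s1 (Set.univ : Set G).ncard Set.univ
      le_rfl (by simp [Subgroup.closure_univ])
    exact ⟨t.ncard, t, Set.toFinite t, rfl, ht⟩
  have := Nat.sSup_mem hne (mIrr_bddAbove G)
  obtain ⟨s, hfin, hcard, hirr⟩ := this
  exact ⟨s, hfin, hcard, hirr⟩

lemma IrredSeq.injective {n : ℕ} {g : Fin n → G} (hg : IrredSeq g) :
    Function.Injective g := by
  intro i k hik
  by_contra hne
  apply hg.2 i
  refine le_antisymm le_top ?_
  rw [← hg.1]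
  apply Subgroup.closure_mono
  rintro y ⟨l, rfl⟩
  by_cases hl : l = i
  · subst hl
    exact ⟨k, fun h => hne (h.symm), hik.symm⟩
  · exact ⟨l, hl, rfl⟩

lemma IrredSeq.le_mIrr [Finite G] {n : ℕ} {g : Fin n → G} (hg : IrredSeq g) :
    n ≤ mIrr G := by
  apply le_csSup (mIrr_bddAbove G)
  refine ⟨Set.range g, Set.toFinite _, ?_, hg.1, ?_⟩
  · rw [← Set.image_univ, Set.ncard_image_of_injective _ hg.injective]
    simp [Set.ncard_univ]
  · rintro x ⟨i, rfl⟩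
    have : Set.range g \ {g i} = g '' {i}ᶜ := by
      ext y
      constructor
      · rintro ⟨⟨l, rfl⟩, hy⟩
        exact ⟨l, fun h => hy (Set.mem_singleton_iff.mpr
          (congrArg g (Set.mem_singleton_iff.mp h))), rfl⟩
      · rintro ⟨l, hl, rfl⟩
        exact ⟨⟨l, rfl⟩, fun h => hl (hg.injective h)⟩
    rw [this]
    exact hg.2 i

end Helpers

section MinNormal

variable {G : Type*} [Group G]

lemma subgroup_card_lt [Finite G] {K H : Subgroup G} (h : K < H) :
    Nat.card K < Nat.card H := by
  have : Nat.card ((K : Set G) : Type _) < Nat.card ((H : Set G) : Type _) := by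
    rw [Nat.card_coe_set_eq, Nat.card_coe_set_eq]
    exact Set.ncard_lt_ncard (SetLike.coe_ssubset_coe.mpr h) (Set.toFinite _)
  exact this

lemma exists_isMinimalNormal (G : Type*) [Group G] [Finite G] [Nontrivial G] :
    ∃ N : Subgroup G, IsMinimalNormal N := by
  have key : ∀ (n : ℕ) (H : Subgroup G), Nat.card H ≤ n → H.Normal → H ≠ ⊥ →
      ∃ N : Subgroup G, N ≤ H ∧ IsMinimalNormal N := by
    intro n
    induction n with
    | zero =>
      intro H hcard _ _
      have : 0 < Nat.card H := Nat.card_pos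
      omega
    | succ n ih =>
      intro H hcard hnorm hne
      by_cases hmin : ∀ K : Subgroup G, K.Normal → K ≤ H → K = ⊥ ∨ K = H
      · exact ⟨H, le_rfl, hnorm, hne, hmin⟩
      · push_neg at hmin
        obtain ⟨K, hKnorm, hKle, hKbot, hKH⟩ := hmin
        have hlt : Nat.card K < Nat.card H := subgroup_card_lt (lt_of_le_of_ne hKle hKH)
        obtain ⟨N, hNK, hN⟩ := ih K (by omega) hKnorm hKbot
        exact ⟨N, hNK.trans hKle, hN⟩
  have htopbot : (⊤ : Subgroup G) ≠ ⊥ := by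
    intro h
    obtain ⟨x, y, hxy⟩ := exists_pair_ne G
    apply hxy
    have hx : x ∈ (⊥ : Subgroup G) := h ▸ Subgroup.mem_top x
    have hy : y ∈ (⊥ : Subgroup G) := h ▸ Subgroup.mem_top y
    rw [Subgroup.mem_bot.mp hx, Subgroup.mem_bot.mp hy]
  obtain ⟨N, _, hN⟩ := key (Nat.card (⊤ : Subgroup G)) ⊤ le_rfl inferInstance htopbot
  exact ⟨N, hN⟩

open scoped commutatorElement in
lemma IsMinimalNormal.abelian [Group.IsSolvable G] {N : Subgroup G} (hN : IsMinimalNormal N) :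
    ∀ a ∈ N, ∀ b ∈ N, a * b = b * a := by
  haveI := hN.1
  have hle : ⁅N, N⁆ ≤ N := Subgroup.commutator_le_left N N
  rcases hN.2.2 ⁅N, N⁆ inferInstance hle with h | h
  · intro a ha b hb
    have hmem : ⁅a, b⁆ ∈ ⁅N, N⁆ := Subgroup.commutator_mem_commutator ha hb
    rw [h, Subgroup.mem_bot] at hmem
    exact commutatorElement_eq_one_iff_commute.mp hmem
  · exfalso
    have key : ∀ k, N ≤ derivedSeries G k := by
      intro k
      induction k with
      | zero => rw [derivedSeries_zero]; exact le_top
      | succ k ihk =>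
        rw [derivedSeries_succ, ← h]
        exact Subgroup.commutator_mono ihk ihk
    obtain ⟨k, hk⟩ := Group.IsSolvable.solvable (G := G)
    exact hN.2.1 (le_bot_iff.mp (hk ▸ key k))

lemma lemA {N P : Subgroup G} (hNnorm : N.Normal)
    (hab : ∀ a ∈ N, ∀ b ∈ N, a * b = b * a)
    (hsup : P ⊔ N = ⊤) : (P ⊓ N).Normal := by
  constructor
  intro m hm g
  have hg : g ∈ ((P ⊔ N : Subgroup G) : Set G) := by rw [hsup]; trivial
  rw [Subgroup.mul_normal P N] at hg
  obtain ⟨p, hp, a, ha, rfl⟩ := hg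
  have h1 : a * m * a⁻¹ = m := by
    rw [hab a ha m hm.2, mul_inv_cancel_right]
  have h2 : p * a * m * (p * a)⁻¹ = p * (a * m * a⁻¹) * p⁻¹ := by group
  rw [h2, h1]
  exact ⟨Subgroup.mul_mem _ (Subgroup.mul_mem _ hp hm.1) (Subgroup.inv_mem _ hp),
    hNnorm.conj_mem m hm.2 p⟩

lemma lemB {N P : Subgroup G} (hN : IsMinimalNormal N)
    (hab : ∀ a ∈ N, ∀ b ∈ N, a * b = b * a)
    (hsup : P ⊔ N = ⊤) : P = ⊤ ∨ P ⊓ N = ⊥ := by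
  rcases hN.2.2 (P ⊓ N) (lemA hN.1 hab hsup) inf_le_right with h | h
  · exact Or.inr h
  · left
    have : N ≤ P := by
      rw [← h]; exact inf_le_left
    rw [← hsup, sup_eq_left.mpr this]

lemma lemC {N L : Subgroup G} (hN : IsMinimalNormal N)
    (hab : ∀ a ∈ N, ∀ b ∈ N, a * b = b * a)
    (hsup : L ⊔ N = ⊤) (hinf : L ⊓ N = ⊥)
    {u : G} (hu : u ∈ N) (hu1 : u ≠ 1) : L ⊔ Subgroup.closure {u} = ⊤ := by
  have hcu : Subgroup.closure {u} ≤ N := by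
    rw [Subgroup.closure_le]
    simpa using hu
  have hsup' : (L ⊔ Subgroup.closure {u}) ⊔ N = ⊤ := by
    rw [sup_assoc, sup_eq_right.mpr hcu, hsup]
  rcases lemB hN hab hsup' with h | h
  · exact h
  · exfalso
    apply hu1
    have : u ∈ (L ⊔ Subgroup.closure {u}) ⊓ N :=
      ⟨Subgroup.mem_sup_right (Subgroup.subset_closure rfl), hu⟩
    rw [h, Subgroup.mem_bot] at this
    exact this

lemma isKGroup_quotient (hK : IsKGroup G) (N : Subgroup G) [N.Normal] :
    IsKGroup (G ⧸ N) := by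
  intro Hbar
  set π := QuotientGroup.mk' N
  have hsurj : Function.Surjective π := QuotientGroup.mk'_surjective N
  obtain ⟨X, hsup, hinf⟩ := hK (Subgroup.comap π Hbar)
  refine ⟨Subgroup.map π X, ?_, ?_⟩
  · calc Hbar ⊔ Subgroup.map π X
        = Subgroup.map π (Subgroup.comap π Hbar) ⊔ Subgroup.map π X := by
          rw [Subgroup.map_comap_eq_self_of_surjective hsurj]
      _ = Subgroup.map π (Subgroup.comap π Hbar ⊔ X) := by rw [Subgroup.map_sup]
      _ = ⊤ := by rw [hsup, Subgroup.map_top_of_surjective π hsurj]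
  · rw [eq_bot_iff]
    rintro y ⟨hy1, hy2⟩
    obtain ⟨x, hxX, rfl⟩ := hy2
    have hx : x ∈ Subgroup.comap π Hbar ⊓ X := ⟨hy1, hxX⟩
    rw [hinf, Subgroup.mem_bot] at hx
    rw [hx, Subgroup.mem_bot, map_one]

end MinNormal

lemma exists_mem_ne_one {G : Type*} [Group G] {N : Subgroup G} (h : N ≠ ⊥) :
    ∃ u : G, u ∈ N ∧ u ≠ 1 := by
  by_contra hc
  push_neg at hc
  apply h
  ext y
  simp only [Subgroup.mem_bot]
  exact ⟨fun hy => hc y hy, fun hy => hy ▸ N.one_mem⟩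

lemma mIrr_quot_succ_le {G : Type*} [Group G] [Finite G] (hK : IsKGroup G)
    (N : Subgroup G) [N.Normal] (hN : IsMinimalNormal N)
    (hab : ∀ a ∈ N, ∀ b ∈ N, a * b = b * a) :
    mIrr (G ⧸ N) + 1 ≤ mIrr G := by
  obtain ⟨sb, hsbfin, hsbcard, hsbgen, hsbirr⟩ := mIrr_mem (G ⧸ N)
  obtain ⟨K, hsupK, hinfK⟩ := hK N
  set π := QuotientGroup.mk' N with hπdef
  have hsurj : Function.Surjective π := QuotientGroup.mk'_surjective N
  set φ : K →* G ⧸ N := π.comp K.subtype with hφdef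
  have hφinj : Function.Injective φ := by
    intro k₁ k₂ hk
    have h1 : π (↑k₁ * (↑k₂)⁻¹ : G) = 1 := by
      rw [map_mul, map_inv, show π ↑k₁ = π ↑k₂ from hk, mul_inv_cancel]
    have h2 : (↑k₁ * (↑k₂)⁻¹ : G) ∈ N := by
      rwa [hπdef, QuotientGroup.mk'_apply, QuotientGroup.eq_one_iff] at h1
    have h3 : (↑k₁ * (↑k₂)⁻¹ : G) ∈ N ⊓ K :=
      ⟨h2, K.mul_mem k₁.2 (K.inv_mem k₂.2)⟩
    rw [hinfK, Subgroup.mem_bot, mul_inv_eq_one] at h3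
    exact Subtype.ext h3
  have hφsurj : Function.Surjective φ := by
    intro y
    obtain ⟨g, rfl⟩ := hsurj y
    have hg : g ∈ ((N ⊔ K : Subgroup G) : Set G) := by rw [hsupK]; trivial
    rw [Subgroup.normal_mul] at hg
    obtain ⟨a, ha, k, hkK, rfl⟩ := hg
    refine ⟨⟨k, hkK⟩, ?_⟩
    show π k = π (a * k)
    rw [map_mul, show π a = 1 by
      rw [hπdef, QuotientGroup.mk'_apply, QuotientGroup.eq_one_iff]; exact ha, one_mul]
  set e := MulEquiv.ofBijective φ ⟨hφinj, hφsurj⟩ with hedef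
  set f : G ⧸ N → G := fun y => ((e.symm y : K) : G) with hfdef
  have hπf : ∀ y, π (f y) = y := fun y => e.apply_symm_apply y
  have hfinj : Function.Injective f :=
    fun a b hab' => e.symm.injective (Subtype.coe_injective hab')
  set s : Set G := f '' sb with hsdef
  have hcls : Subgroup.closure s = K := by
    have h1 : s = Subtype.val '' (⇑e.symm '' sb) := by
      rw [Set.image_image]
    have h2 : Subgroup.closure (⇑e.symm '' sb) = ⊤ := by
      have h3 : (⇑e.symm '' sb) = ⇑e.symm.toMonoidHom '' sb := rfl
      rw [h3, ← MonoidHom.map_closure, hsbgen]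
      exact Subgroup.map_top_of_surjective _ e.symm.surjective
    have h4 : (Subtype.val '' (⇑e.symm '' sb)) = ⇑K.subtype '' (⇑e.symm '' sb) := rfl
    rw [h1, h4, ← MonoidHom.map_closure, h2, ← MonoidHom.range_eq_map,
      Subgroup.range_subtype]
  obtain ⟨u, huN, hu1⟩ := exists_mem_ne_one hN.2.1
  have hKne : K ≠ ⊤ := by
    intro h
    exact hN.2.1 (by rw [← hinfK, h, inf_top_eq])
  have hus : u ∉ s := by
    intro hus
    have huK : u ∈ K := hcls ▸ Subgroup.subset_closure hus
    have : u ∈ N ⊓ K := ⟨huN, huK⟩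
    rw [hinfK, Subgroup.mem_bot] at this
    exact hu1 this
  apply le_csSup (mIrr_bddAbove G)
  refine ⟨insert u s, Set.toFinite _, ?_, ?_, ?_⟩
  · rw [Set.ncard_insert_of_notMem hus (Set.toFinite s),
      hsdef, Set.ncard_image_of_injective _ hfinj, hsbcard]
  · rw [Set.insert_eq, Subgroup.closure_union, hcls, sup_comm]
    exact lemC hN hab (by rw [sup_comm]; exact hsupK) (by rw [inf_comm]; exact hinfK) huN hu1
  · intro x hx
    rcases Set.mem_insert_iff.mp hx with rfl | hxs
    · rw [Set.insert_diff_self_of_notMem hus, hcls]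
      exact hKne
    · obtain ⟨y, hy, rfl⟩ := hxs
      intro htop
      have hne' : u ≠ f y := fun h => hus (h ▸ Set.mem_image_of_mem f hy)
      have h3 : insert u s \ {f y} = insert u (s \ {f y}) :=
        Set.insert_diff_of_notMem s (by simpa using hne')
      have h4 : s \ {f y} = f '' (sb \ {y}) := by
        rw [hsdef, ← Set.image_singleton, ← Set.image_diff hfinj]
      have h6 : π u = 1 := by
        rw [hπdef, QuotientGroup.mk'_apply, QuotientGroup.eq_one_iff]; exact huN
      have h7 : π '' (f '' (sb \ {y})) = sb \ {y} := by
        rw [Set.image_image]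
        simp only [hπf]
        exact Set.image_id _
      have h5 := congrArg (Subgroup.map π) htop
      rw [MonoidHom.map_closure, Subgroup.map_top_of_surjective _ hsurj, h3,
        Set.image_insert_eq, h6, h4, h7, Set.insert_eq, Subgroup.closure_union,
        Subgroup.closure_singleton_one, bot_sup_eq] at h5
      exact hsbirr y hy h5

universe u

theorem master : ∀ (k : ℕ) (G : Type u) [Group G] [Finite G] [Group.IsSolvable G],
    Nat.card G < k → IsKGroup G →
    ∀ (n : ℕ) (g : Fin n → G), IrredSeq g → n = mIrr G → ∀ x : G, x ≠ 1 →
      ∃ i, Subgroup.closure (Set.range (Function.update g i x)) = ⊤ := by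
  intro k
  induction k with
  | zero =>
    intro G _ _ _ hcard
    exact absurd hcard (Nat.not_lt_zero _)
  | succ k ih =>
    intro G _ _ _ hcard hK n g hg hn x hx
    by_contra hcon
    push_neg at hcon
    haveI : Nontrivial G := ⟨⟨x, 1, hx⟩⟩
    obtain ⟨N, hN⟩ := exists_isMinimalNormal G
    haveI hNnorm := hN.1
    have hab := hN.abelian
    set π := QuotientGroup.mk' N with hπdef
    have hsurj : Function.Surjective π := QuotientGroup.mk'_surjective N
    have hKbar : IsKGroup (G ⧸ N) := isKGroup_quotient hK N
    have hcard' : Nat.card (G ⧸ N) < k := by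
      have h1 : Nat.card G = Nat.card (G ⧸ N) * Nat.card N :=
        Subgroup.card_eq_card_quotient_mul_card_subgroup N
      obtain ⟨u, huN, hu1⟩ := exists_mem_ne_one hN.2.1
      have h2 : 1 < Nat.card N := by
        rw [Finite.one_lt_card_iff_nontrivial]
        exact ⟨⟨u, huN⟩, 1, fun h => hu1 (by simpa using congrArg Subtype.val h)⟩
      have h3 : 0 < Nat.card (G ⧸ N) := Nat.card_pos
      have h4 : Nat.card (G ⧸ N) * 2 ≤ Nat.card (G ⧸ N) * Nat.card N :=
        Nat.mul_le_mul_left _ h2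
      omega
    have hmq : mIrr (G ⧸ N) + 1 ≤ mIrr G := mIrr_quot_succ_le hK N hN hab
    obtain ⟨n', rfl⟩ : ∃ n', n = n' + 1 := by
      cases n with
      | zero =>
        exfalso
        have h0 := hg.1
        rw [Set.range_eq_empty, Subgroup.closure_empty] at h0
        exact hx (Subgroup.mem_bot.mp (h0 ▸ Subgroup.mem_top x))
      | succ n' => exact ⟨n', rfl⟩
    -- find j such that images of g without j generate G/N
    have hkey : ∃ j : Fin (n' + 1),
        Subgroup.closure ((fun a => π (g a)) '' {j}ᶜ) = ⊤ := by
      by_contra hcon2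
      push_neg at hcon2
      have hseq : IrredSeq (fun a => π (g a)) := by
        constructor
        · have hr : Set.range (fun a => π (g a)) = ⇑π '' Set.range g := by
            ext z; simp
          rw [hr, ← MonoidHom.map_closure, hg.1]
          exact Subgroup.map_top_of_surjective _ hsurj
        · exact hcon2
      have := hseq.le_mIrr
      omega
    obtain ⟨j, hj⟩ := hkey
    have hπim : ∀ t : Set (Fin (n' + 1)), π '' (g '' t) = (fun a => π (g a)) '' t :=
      fun t => Set.image_image _ _ t
    -- H_j is a complement of N
    have sup_of_map_top : ∀ P : Subgroup G, Subgroup.map π P = ⊤ → P ⊔ N = ⊤ := by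
      intro P hP
      have h2 := Subgroup.comap_map_eq π P
      rw [hP, Subgroup.comap_top, QuotientGroup.ker_mk'] at h2
      exact h2.symm
    have hHjsup : Subgroup.closure (g '' {j}ᶜ) ⊔ N = ⊤ := by
      apply sup_of_map_top
      rw [MonoidHom.map_closure, hπim, hj]
    have hHjne : Subgroup.closure (g '' {j}ᶜ) ≠ ⊤ := hg.2 j
    have hHjinf : Subgroup.closure (g '' {j}ᶜ) ⊓ N = ⊥ := by
      rcases lemB hN hab hHjsup with h | h
      · exact absurd h hHjne
      · exact h
    -- x is not in N
    have hxN : x ∉ N := by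
      intro hxN
      apply hcon j
      rw [range_update, Set.insert_eq, Subgroup.closure_union, sup_comm]
      exact lemC hN hab hHjsup hHjinf hxN hx
    -- the shortened image sequence
    set h : Fin n' → G ⧸ N := fun a => π (g (j.succAbove a)) with hhdef
    have hrange : Set.range h = (fun a => π (g a)) '' {j}ᶜ := by
      have : Set.range h = (fun a => π (g a)) '' Set.range j.succAbove :=
        Set.range_comp (fun a => π (g a)) j.succAbove
      rw [this, Fin.range_succAbove]
    have him : ∀ i' : Fin n',
        h '' {i'}ᶜ = (fun a => π (g a)) '' ({j.succAbove i'}ᶜ ∩ {j}ᶜ) := by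
      intro i'
      have h1 : h '' {i'}ᶜ = (fun a => π (g a)) '' (j.succAbove '' {i'}ᶜ) :=
        (Set.image_image (fun a => π (g a)) j.succAbove {i'}ᶜ).symm
      rw [h1, succAbove_image_compl]
    -- irredundance of h
    have hhirr : IrredSeq h := by
      constructor
      · rw [hrange]; exact hj
      · intro i' htop
        set i := j.succAbove i' with hidef
        have hCsub : g '' ({i}ᶜ ∩ {j}ᶜ) ⊆ g '' {j}ᶜ :=
          Set.image_mono Set.inter_subset_right
        have hCsup : Subgroup.closure (g '' ({i}ᶜ ∩ {j}ᶜ)) ⊔ N = ⊤ := by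
          apply sup_of_map_top
          rw [MonoidHom.map_closure, hπim, ← him, htop]
        have hCne : Subgroup.closure (g '' ({i}ᶜ ∩ {j}ᶜ)) ≠ ⊤ := by
          intro hc
          exact hHjne (le_antisymm le_top (hc ▸ Subgroup.closure_mono hCsub))
        have hCinf : Subgroup.closure (g '' ({i}ᶜ ∩ {j}ᶜ)) ⊓ N = ⊥ := by
          rcases lemB hN hab hCsup with h | h
          · exact absurd h hCne
          · exact h
        have hgi : g i ∈ ((Subgroup.closure (g '' ({i}ᶜ ∩ {j}ᶜ)) ⊔ N : Subgroup G) : Set G) := by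
          rw [hCsup]; trivial
        rw [Subgroup.mul_normal] at hgi
        obtain ⟨c, hc, u, hu, hcu⟩ := hgi
        have hcu' : c * u = g i := hcu
        have hc' : c ∈ Subgroup.closure (g '' ({i}ᶜ ∩ {j}ᶜ)) := hc
        by_cases hu1 : u = 1
        · -- then g i is in the closure of the other g's, contradiction
          have hgiC : g i ∈ Subgroup.closure (g '' ({i}ᶜ ∩ {j}ᶜ)) := by
            rw [← hcu', hu1, mul_one]; exact hc'
          apply hg.2 i
          have hsub : Set.range g ⊆ ↑(Subgroup.closure (g '' {i}ᶜ)) := by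
            rintro y ⟨l, rfl⟩
            by_cases hl : l = i
            · subst hl
              exact Subgroup.closure_mono
                (Set.image_mono Set.inter_subset_left) hgiC
            · exact Subgroup.subset_closure ⟨l, hl, rfl⟩
          exact le_antisymm le_top (by rw [← hg.1]; exact (Subgroup.closure_le _).mpr hsub)
        · -- u ≠ 1 : closure of g '' {j}ᶜ would be ⊤
          have hCu := lemC hN hab hCsup hCinf hu hu1
          apply hHjne
          apply le_antisymm le_top
          rw [← hCu]
          apply sup_le
          · exact Subgroup.closure_mono hCsub
          · rw [Subgroup.closure_le]
            intro z hz
            rw [Set.mem_singleton_iff.mp hz]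
            have hcmem : c ∈ Subgroup.closure (g '' {j}ᶜ) :=
              Subgroup.closure_mono hCsub hc'
            have hgimem : g i ∈ Subgroup.closure (g '' {j}ᶜ) :=
              Subgroup.subset_closure ⟨i, Fin.succAbove_ne j i', rfl⟩
            have : u = c⁻¹ * g i := by rw [← hcu']; group
            rw [this]
            exact Subgroup.mul_mem _ (Subgroup.inv_mem _ hcmem) hgimem
    -- h has maximal length in G/N
    have hm' : n' = mIrr (G ⧸ N) := by
      have h1 := hhirr.le_mIrr
      omega
    have hx' : π x ≠ 1 := by
      intro hh
      rw [hπdef, QuotientGroup.mk'_apply, QuotientGroup.eq_one_iff] at hh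
      exact hxN hh
    obtain ⟨i', hi'⟩ := ih (G ⧸ N) hcard' hKbar n' h hhirr hm' (π x) hx'
    set i := j.succAbove i' with hidef
    have hij : i ≠ j := Fin.succAbove_ne j i'
    -- the subgroup L
    set L := Subgroup.closure (g '' ({i}ᶜ ∩ {j}ᶜ) ∪ {x}) with hLdef
    have hLsup : L ⊔ N = ⊤ := by
      apply sup_of_map_top
      rw [hLdef, MonoidHom.map_closure, Set.image_union, hπim, Set.image_singleton]
      rw [range_update, him i', ← hidef, Set.insert_eq, Set.union_comm] at hi'
      exact hi'
    have hMi : Subgroup.closure (g '' {i}ᶜ ∪ {x}) ≠ ⊤ := by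
      have := hcon i
      rw [range_update, Set.insert_eq, Set.union_comm] at this
      exact this
    have hMj : Subgroup.closure (g '' {j}ᶜ ∪ {x}) ≠ ⊤ := by
      have := hcon j
      rw [range_update, Set.insert_eq, Set.union_comm] at this
      exact this
    have hLne : L ≠ ⊤ := by
      intro hc
      apply hMi
      apply le_antisymm le_top
      rw [← hc, hLdef]
      apply Subgroup.closure_mono
      exact Set.union_subset_union_left _ (Set.image_mono Set.inter_subset_left)
    have hLinf : L ⊓ N = ⊥ := by
      rcases lemB hN hab hLsup with h | h
      · exact absurd h hLne
      · exact h
    -- decompose g i over L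
    have hgidec : g i ∈ ((L ⊔ N : Subgroup G) : Set G) := by rw [hLsup]; trivial
    rw [Subgroup.mul_normal] at hgidec
    obtain ⟨c, hc, u, hu, hcu⟩ := hgidec
    have hcu' : c * u = g i := hcu
    have hc2 : c ∈ L := hc
    have hgiL : g i ∈ L := by
      by_cases hu1 : u = 1
      · rw [← hcu', hu1, mul_one]; exact hc2
      · exfalso
        have hCu := lemC hN hab hLsup hLinf hu hu1
        apply hMj
        apply le_antisymm le_top
        rw [← hCu]
        apply sup_le
        · rw [hLdef]
          apply Subgroup.closure_mono
          apply Set.union_subset_union_left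
          exact Set.image_mono Set.inter_subset_right
        · rw [Subgroup.closure_le]
          intro z hz
          rw [Set.mem_singleton_iff.mp hz]
          have hcmem : c ∈ Subgroup.closure (g '' {j}ᶜ ∪ {x}) :=
            Subgroup.closure_mono (Set.union_subset_union_left _
              (Set.image_mono Set.inter_subset_right)) hc2
          have hgimem : g i ∈ Subgroup.closure (g '' {j}ᶜ ∪ {x}) :=
            Subgroup.subset_closure (Or.inl ⟨i, hij, rfl⟩)
          have : u = c⁻¹ * g i := by rw [← hcu']; group
          rw [this]
          exact Subgroup.mul_mem _ (Subgroup.inv_mem _ hcmem) hgimem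
    -- decompose g j over L
    have hgjdec : g j ∈ ((L ⊔ N : Subgroup G) : Set G) := by rw [hLsup]; trivial
    rw [Subgroup.mul_normal] at hgjdec
    obtain ⟨c', hc', v, hv, hcv⟩ := hgjdec
    have hcv' : c' * v = g j := hcv
    have hc3 : c' ∈ L := hc'
    have hgjL : g j ∈ L := by
      by_cases hv1 : v = 1
      · rw [← hcv', hv1, mul_one]; exact hc3
      · exfalso
        have hCv := lemC hN hab hLsup hLinf hv hv1
        apply hMi
        apply le_antisymm le_top
        rw [← hCv]
        apply sup_le
        · rw [hLdef]
          apply Subgroup.closure_mono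
          apply Set.union_subset_union_left
          exact Set.image_mono Set.inter_subset_left
        · rw [Subgroup.closure_le]
          intro z hz
          rw [Set.mem_singleton_iff.mp hz]
          have hcmem : c' ∈ Subgroup.closure (g '' {i}ᶜ ∪ {x}) :=
            Subgroup.closure_mono (Set.union_subset_union_left _
              (Set.image_mono Set.inter_subset_left)) hc3
          have hgjmem : g j ∈ Subgroup.closure (g '' {i}ᶜ ∪ {x}) :=
            Subgroup.subset_closure (Or.inl ⟨j, fun hh => hij hh.symm, rfl⟩)
          have : v = c'⁻¹ * g j := by rw [← hcv']; group
          rw [this]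
          exact Subgroup.mul_mem _ (Subgroup.inv_mem _ hcmem) hgjmem
    -- now L contains everything
    apply hLne
    apply le_antisymm le_top
    rw [← hg.1]
    rw [Subgroup.closure_le]
    rintro y ⟨l, rfl⟩
    by_cases hl1 : l = i
    · subst hl1; exact hgiL
    · by_cases hl2 : l = j
      · subst hl2; exact hgjL
      · exact Subgroup.subset_closure (Or.inl ⟨l, ⟨hl1, hl2⟩, rfl⟩)

theorem kGroup_implies_replacementProperty
    (G : Type*) [Group G] [Finite G] [Group.IsSolvable G] (hK : IsKGroup G) :
    ReplacementProperty G := by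
  intro g hg x hx
  exact master (Nat.card G + 1) G (Nat.lt_succ_self _) hK (mIrr G) g hg rfl x hx
end

section
/- Let G be a finite soluble group. Then G is a K-group (its subgroup lattice is complemented) if and only if every chief factor of G is complemented in G. -/
open Subgroup
open scoped Classical

section ZacherHelpers

private lemma isKGroup_of_mulEquiv {A B : Type*} [Group A] [Group B] (e : A ≃* B)
    (h : IsKGroup A) : IsKGroup B := by
  intro S
  obtain ⟨T, hT1, hT2⟩ := h (S.comap e.toMonoidHom)
  refine ⟨T.map e.toMonoidHom, ?_, ?_⟩
  · have := congrArg (Subgroup.map (e.toMonoidHom)) hT1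
    rwa [Subgroup.map_sup, Subgroup.map_comap_eq_self_of_surjective e.surjective,
      Subgroup.map_top_of_surjective _ e.surjective] at this
  · refine le_antisymm ?_ bot_le
    intro x hx
    obtain ⟨hxS, hxT⟩ := Subgroup.mem_inf.mp hx
    obtain ⟨t, ht, rfl⟩ := Subgroup.mem_map.mp hxT
    have hmem : t ∈ S.comap e.toMonoidHom ⊓ T := Subgroup.mem_inf.mpr ⟨hxS, ht⟩
    rw [hT2] at hmem
    have : t = 1 := Subgroup.mem_bot.mp hmem
    simp [this]

private lemma chief_quotient {G : Type*} [Group G] (N : Subgroup G) [N.Normal]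
    (hyp : ∀ A B : Subgroup G, ChiefFactor A B → ComplementedFactor A B) :
    ∀ A B : Subgroup (G ⧸ N), ChiefFactor A B → ComplementedFactor A B := by
  set π := QuotientGroup.mk' N with hπdef
  have hπ : Function.Surjective π := QuotientGroup.mk'_surjective N
  have hker : π.ker = N := QuotientGroup.ker_mk' N
  rintro Abar Bbar ⟨hA, hB, hlt, hchief⟩
  have hkerle : ∀ S : Subgroup (G ⧸ N), N ≤ S.comap π := by
    intro S x hx
    show π x ∈ S
    have : π x = 1 := (QuotientGroup.eq_one_iff x).mpr hx
    rw [this]; exact S.one_mem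
  have hcf : ChiefFactor (Abar.comap π) (Bbar.comap π) := by
    refine ⟨hA.comap π, hB.comap π, ?_, ?_⟩
    · refine lt_of_le_of_ne (Subgroup.comap_mono hlt.le) ?_
      intro h
      have := congrArg (Subgroup.map π) h
      rw [Subgroup.map_comap_eq_self_of_surjective hπ,
        Subgroup.map_comap_eq_self_of_surjective hπ] at this
      exact hlt.ne this
    · intro M hM hAM hMB
      have hNM : N ≤ M := le_trans (hkerle Abar) hAM
      have h1 : Abar ≤ M.map π := by
        rw [← Subgroup.map_comap_eq_self_of_surjective hπ Abar]
        exact Subgroup.map_mono hAM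
      have h2 : M.map π ≤ Bbar := by
        rw [← Subgroup.map_comap_eq_self_of_surjective hπ Bbar]
        exact Subgroup.map_mono hMB
      rcases hchief (M.map π) (hM.map π hπ) h1 h2 with h | h
      · left
        have := congrArg (Subgroup.comap π) h
        rwa [Subgroup.comap_map_eq, hker, sup_eq_left.mpr hNM] at this
      · right
        have := congrArg (Subgroup.comap π) h
        rwa [Subgroup.comap_map_eq, hker, sup_eq_left.mpr hNM] at this
  obtain ⟨K, hKA, hKsup, hKinf⟩ := hyp _ _ hcf
  refine ⟨K.map π, ?_, ?_, ?_⟩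
  · rw [← Subgroup.map_comap_eq_self_of_surjective hπ Abar]
    exact Subgroup.map_mono hKA
  · have := congrArg (Subgroup.map π) hKsup
    rwa [Subgroup.map_sup, Subgroup.map_comap_eq_self_of_surjective hπ,
      Subgroup.map_top_of_surjective _ hπ] at this
  · apply le_antisymm
    · intro x hx
      obtain ⟨hx1, hx2⟩ := Subgroup.mem_inf.mp hx
      obtain ⟨k, hk, rfl⟩ := Subgroup.mem_map.mp hx1
      have : k ∈ K ⊓ Bbar.comap π := Subgroup.mem_inf.mpr ⟨hk, hx2⟩
      rw [hKinf] at this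
      rw [← Subgroup.map_comap_eq_self_of_surjective hπ Abar]
      exact Subgroup.mem_map_of_mem π this
    · refine le_inf ?_ hlt.le
      rw [← Subgroup.map_comap_eq_self_of_surjective hπ Abar]
      exact Subgroup.map_mono hKA

private lemma decomp_of_sup_eq_top {G : Type*} [Group G] {K N : Subgroup G} [N.Normal]
    (h : K ⊔ N = ⊤) (g : G) : ∃ k ∈ K, ∃ n ∈ N, g = k * n := by
  have hg : g ∈ (↑(K ⊔ N) : Set G) := by rw [h]; trivial
  rw [Subgroup.mul_normal] at hg
  obtain ⟨k, hk, n, hn, hkn⟩ := Set.mem_mul.mp hg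
  exact ⟨k, hk, n, hn, hkn.symm⟩

open scoped commutatorElement in
private lemma backward_aux : ∀ (n : ℕ) (G : Type u) [Group G] [Finite G] [Group.IsSolvable G],
    Nat.card G = n →
    (∀ A B : Subgroup G, ChiefFactor A B → ComplementedFactor A B) → IsKGroup G := by
  intro n
  induction n using Nat.strong_induction_on with
  | _ n IH =>
  intro G _ _ _ hn hyp
  rcases subsingleton_or_nontrivial G with hG | hG
  · haveI : Subsingleton (Subgroup G) :=
      ⟨fun a b => by
        ext x
        rw [Subsingleton.elim x 1]
        exact iff_of_true (one_mem a) (one_mem b)⟩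
    intro H
    exact ⟨⊤, Subsingleton.elim _ _, Subsingleton.elim _ _⟩
  -- nontrivial group: find a minimal normal subgroup
  haveI : Finite (Subgroup G) :=
    Finite.of_injective (fun H => (H : Set G)) SetLike.coe_injective
  have htopbot : (⊤ : Subgroup G) ≠ ⊥ := by
    intro h
    obtain ⟨x, hx⟩ := exists_ne (1 : G)
    exact hx (Subgroup.mem_bot.mp (h ▸ Subgroup.mem_top x))
  obtain ⟨N, hNS, hNmin'⟩ :=
    (IsWellFounded.wf (r := ((· < ·) : Subgroup G → Subgroup G → Prop))).has_min
      {M : Subgroup G | M.Normal ∧ M ≠ ⊥} ⟨⊤, inferInstance, htopbot⟩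
  obtain ⟨hNnormal, hNbot⟩ := hNS
  haveI := hNnormal
  have hNmin : ∀ M : Subgroup G, M.Normal → M ≤ N → M = ⊥ ∨ M = N := by
    intro M hM hMN
    by_cases h : M = ⊥
    · exact Or.inl h
    · right
      by_contra hne
      exact hNmin' M ⟨hM, h⟩ (lt_of_le_of_ne hMN hne)
  -- the chief factor ⊥ < N is complemented
  obtain ⟨K, -, hKsup, hKinf⟩ := hyp ⊥ N
    ⟨inferInstance, hNnormal, bot_lt_iff_ne_bot.mpr hNbot,
      fun M hM _ hMN => hNmin M hM hMN⟩
  -- N is abelian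
  have habel : ∀ a ∈ N, ∀ b ∈ N, a * b = b * a := by
    have hle : ⁅N, N⁆ ≤ N := Subgroup.commutator_le.mpr fun a ha b hb => by
      rw [commutatorElement_def]
      exact N.mul_mem (N.mul_mem (N.mul_mem ha hb) (N.inv_mem ha)) (N.inv_mem hb)
    have hNN : ⁅N, N⁆ = ⊥ := by
      rcases hNmin ⁅N, N⁆ inferInstance hle with h | h
      · exact h
      · exfalso
        have hdesc : ∀ k, N ≤ derivedSeries G k := by
          intro k
          induction k with
          | zero => rw [derivedSeries_zero]; exact le_top
          | succ k ih =>
            rw [derivedSeries_succ]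
            calc N = ⁅N, N⁆ := h.symm
              _ ≤ _ := Subgroup.commutator_mono ih ih
        obtain ⟨m, hm⟩ := (isSolvable_def G).mp inferInstance
        exact hNbot (le_bot_iff.mp (hm ▸ hdesc m))
    intro a ha b hb
    have hmem : ⁅a, b⁆ ∈ (⊥ : Subgroup G) :=
      hNN ▸ Subgroup.commutator_mem_commutator ha hb
    exact commutatorElement_eq_one_iff_mul_comm.mp (Subgroup.mem_bot.mp hmem)
  -- quotient
  set π := QuotientGroup.mk' N with hπdef
  have hπ : Function.Surjective π := QuotientGroup.mk'_surjective N
  have hker : π.ker = N := QuotientGroup.ker_mk' N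
  have hcardlt : Nat.card (G ⧸ N) < n := by
    have h1 : Nat.card G = Nat.card (G ⧸ N) * Nat.card N :=
      Subgroup.card_eq_card_quotient_mul_card_subgroup N
    have h2 : 1 < Nat.card N := (Subgroup.one_lt_card_iff_ne_bot N).mpr hNbot
    have h3 : 0 < Nat.card (G ⧸ N) := Nat.card_pos
    rw [← hn, h1]
    exact (lt_mul_iff_one_lt_right h3).mpr h2
  have hQK : IsKGroup (G ⧸ N) :=
    IH (Nat.card (G ⧸ N)) hcardlt (G ⧸ N) rfl (chief_quotient N hyp)
  intro H
  by_cases hD : H ⊓ N = ⊥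
  · -- case H ⊓ N = ⊥ : pull back a complement of the image of H
    obtain ⟨Xbar, hX1, hX2⟩ := hQK (H.map π)
    have hNX : N ≤ Xbar.comap π := by
      intro x hx
      show π x ∈ Xbar
      have : π x = 1 := (QuotientGroup.eq_one_iff x).mpr hx
      rw [this]; exact Xbar.one_mem
    refine ⟨Xbar.comap π, ?_, ?_⟩
    · have hmap : Subgroup.map π (H ⊔ Xbar.comap π) = ⊤ := by
        rw [Subgroup.map_sup, Subgroup.map_comap_eq_self_of_surjective hπ, hX1]
      have := congrArg (Subgroup.comap π) hmap
      rwa [Subgroup.comap_map_eq, hker,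
        sup_eq_left.mpr (le_trans hNX le_sup_right), Subgroup.comap_top] at this
    · refine le_antisymm ?_ bot_le
      intro x hx
      obtain ⟨hx1, hx2⟩ := Subgroup.mem_inf.mp hx
      have hmem : π x ∈ H.map π ⊓ Xbar :=
        Subgroup.mem_inf.mpr ⟨Subgroup.mem_map_of_mem π hx1, hx2⟩
      rw [hX2] at hmem
      have hxN : x ∈ N := (QuotientGroup.eq_one_iff x).mp (Subgroup.mem_bot.mp hmem)
      have : x ∈ H ⊓ N := Subgroup.mem_inf.mpr ⟨hx1, hxN⟩
      rwa [hD] at this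
  · -- case H ⊓ N ≠ ⊥
    -- step 1: (H ⊓ N) ⊔ K = ⊤
    have hDK : (H ⊓ N) ⊔ K = ⊤ := by
      have hMnormal : (((H ⊓ N) ⊔ K) ⊓ N).Normal := by
        constructor
        intro m hm g
        obtain ⟨hm1, hm2⟩ := Subgroup.mem_inf.mp hm
        obtain ⟨k, hk, n', hn', rfl⟩ := decomp_of_sup_eq_top hKsup g
        have hcomm : n' * m * n'⁻¹ = m := by
          rw [habel n' hn' m hm2]; group
        have hconj : (k * n') * m * (k * n')⁻¹ = k * (n' * m * n'⁻¹) * k⁻¹ := by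
          group
        rw [hconj, hcomm]
        refine Subgroup.mem_inf.mpr ⟨?_, ?_⟩
        · exact mul_mem (mul_mem (Subgroup.mem_sup_right hk) hm1)
            (inv_mem (Subgroup.mem_sup_right hk))
        · exact hNnormal.conj_mem m hm2 k
      have hMne : ((H ⊓ N) ⊔ K) ⊓ N ≠ ⊥ := by
        intro h
        exact hD (le_bot_iff.mp (h ▸ le_inf le_sup_left inf_le_right))
      rcases hNmin _ hMnormal inf_le_right with h | h
      · exact absurd h hMne
      · have hNle : N ≤ (H ⊓ N) ⊔ K :=
          calc N = ((H ⊓ N) ⊔ K) ⊓ N := h.symm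
            _ ≤ (H ⊓ N) ⊔ K := inf_le_left
        rw [eq_top_iff, ← hKsup]
        exact sup_le le_sup_right hNle
    -- step 2: K ≃* G ⧸ N, so K is a K-group "internally"
    set f : K →* G ⧸ N := π.comp K.subtype with hfdef
    have hfinj : Function.Injective f := by
      rw [← MonoidHom.ker_eq_bot_iff]
      refine le_antisymm ?_ bot_le
      intro k hk
      have hkN : (k : G) ∈ N := by
        have : π (k : G) = 1 := hk
        exact (QuotientGroup.eq_one_iff _).mp this
      have : (k : G) ∈ K ⊓ N := Subgroup.mem_inf.mpr ⟨k.2, hkN⟩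
      rw [hKinf] at this
      exact Subgroup.mem_bot.mpr (Subtype.ext (Subgroup.mem_bot.mp this))
    have hfsurj : Function.Surjective f := by
      intro q
      obtain ⟨g, rfl⟩ := hπ q
      obtain ⟨k, hk, n', hn', rfl⟩ := decomp_of_sup_eq_top hKsup g
      refine ⟨⟨k, hk⟩, ?_⟩
      show π k = π (k * n')
      have hn1 : π n' = 1 := (QuotientGroup.eq_one_iff n').mpr hn'
      rw [map_mul, hn1, mul_one]
    have hKgrp : IsKGroup K :=
      isKGroup_of_mulEquiv (MulEquiv.ofBijective f ⟨hfinj, hfsurj⟩).symm hQK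
    obtain ⟨T, hT1, hT2⟩ := hKgrp ((H ⊓ K).subgroupOf K)
    refine ⟨T.map K.subtype, ?_, ?_⟩
    · -- H ⊔ Y = ⊤
      have hmapsup : ((H ⊓ K).subgroupOf K ⊔ T).map K.subtype
          = (H ⊓ K) ⊔ T.map K.subtype := by
        rw [Subgroup.map_sup, Subgroup.subgroupOf_map_subtype, inf_assoc, inf_idem]
      have hmaptop : ((⊤ : Subgroup K)).map K.subtype = K := by
        rw [← MonoidHom.range_eq_map, Subgroup.range_subtype]
      have hKeq : (H ⊓ K) ⊔ T.map K.subtype = K := by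
        have := congrArg (Subgroup.map K.subtype) hT1
        rwa [hmapsup, hmaptop] at this
      have hKle : K ≤ H ⊔ T.map K.subtype :=
        calc K = (H ⊓ K) ⊔ T.map K.subtype := hKeq.symm
          _ ≤ H ⊔ T.map K.subtype := sup_le (le_trans inf_le_left le_sup_left) le_sup_right
      rw [eq_top_iff, ← hDK]
      exact sup_le (le_trans inf_le_left le_sup_left) hKle
    · -- H ⊓ Y = ⊥
      refine le_antisymm ?_ bot_le
      intro x hx
      obtain ⟨hxH, hxY⟩ := Subgroup.mem_inf.mp hx
      obtain ⟨t, ht, rfl⟩ := Subgroup.mem_map.mp hxY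
      have htR : t ∈ (H ⊓ K).subgroupOf K := by
        rw [Subgroup.mem_subgroupOf]
        exact Subgroup.mem_inf.mpr ⟨hxH, t.2⟩
      have hmem : t ∈ (H ⊓ K).subgroupOf K ⊓ T := Subgroup.mem_inf.mpr ⟨htR, ht⟩
      rw [hT2] at hmem
      have ht1 : t = 1 := Subgroup.mem_bot.mp hmem
      simp [ht1]

end ZacherHelpers

theorem kGroup_iff_all_chiefFactors_complemented
    (G : Type*) [Group G] [Finite G] [Group.IsSolvable G] :
    IsKGroup G ↔ ∀ A B : Subgroup G, ChiefFactor A B → ComplementedFactor A B := by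
  constructor
  · intro hK A B hcf
    obtain ⟨hA, hB, hAB, -⟩ := hcf
    haveI := hA
    obtain ⟨X, hX1, hX2⟩ := hK B
    refine ⟨A ⊔ X, le_sup_left, ?_, ?_⟩
    · rw [eq_top_iff, ← hX1]
      exact sup_le (le_sup_right) (le_trans le_sup_right le_sup_left)
    · apply le_antisymm
      · intro x hx
        obtain ⟨hx1, hx2⟩ := Subgroup.mem_inf.mp hx
        have hxset : x ∈ (↑(A ⊔ X) : Set G) := hx1
        rw [Subgroup.normal_mul] at hxset
        obtain ⟨a, ha, y, hy, hay⟩ := Set.mem_mul.mp hxset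
        have hyB : y ∈ B := by
          have hmem : a⁻¹ * (a * y) ∈ B := B.mul_mem (B.inv_mem (hAB.le ha)) (hay ▸ hx2)
          simpa using hmem
        have hybot : y ∈ B ⊓ X := Subgroup.mem_inf.mpr ⟨hyB, hy⟩
        rw [hX2] at hybot
        have hy1 : y = 1 := Subgroup.mem_bot.mp hybot
        rw [← hay, hy1, mul_one]
        exact ha
      · exact le_inf le_sup_left hAB.le
  · intro hyp
    exact backward_aux (Nat.card G) G rfl hyp
end

section
/- If G is a finite soluble group satisfying the strong replacement property with d = d(G) the minimal number of generators, then every proper quotient of G can be generated by d - 1 elements. -/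
open Subgroup
open scoped Classical

theorem strongReplacement_proper_quotient_dGen
    (G : Type*) [Group G] [Finite G] [Group.IsSolvable G]
    (h : StrongReplacementProperty G)
    (N : Subgroup G) [N.Normal] (hN : N ≠ ⊥) :
    dGen (G ⧸ N) ≤ dGen G - 1 := by
  classical
  obtain ⟨x, hxN, hx1⟩ := (Subgroup.bot_or_exists_ne_one N).resolve_left hN
  -- a generating set of minimal size
  have hmem : dGen G ∈ {n | ∃ s : Set G, s.Finite ∧ s.ncard = n ∧ Subgroup.closure s = ⊤} := by
    apply Nat.sInf_mem
    exact ⟨(Set.univ : Set G).ncard, Set.univ, Set.finite_univ, rfl, Subgroup.closure_univ⟩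
  obtain ⟨s, hsfin, hscard, hsclo⟩ := hmem
  haveI := hsfin.fintype
  have hcard : Fintype.card s = dGen G := by
    rw [← hscard, Set.ncard_eq_toFinset_card']
    simp [Set.toFinset_card]
  let e : Fin (dGen G) ≃ s := (Fintype.equivFinOfCardEq hcard).symm
  set d := dGen G with hd
  let g : Fin d → G := fun i => (e i : G)
  have hrange : Set.range g = s := by
    ext y
    constructor
    · rintro ⟨i, rfl⟩; exact (e i).2
    · intro hy; exact ⟨e.symm ⟨y, hy⟩, by simp [g]⟩
  have hgen : Subgroup.closure (Set.range g) = ⊤ := by rw [hrange]; exact hsclo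
  have hirr : IrredSeq g := by
    refine ⟨hgen, fun i hi => ?_⟩
    have hfin : (g '' {i}ᶜ).Finite := (Set.finite_range g).subset (Set.image_subset_range _ _)
    have h1 : d ≤ (g '' {i}ᶜ).ncard :=
      Nat.sInf_le ⟨g '' {i}ᶜ, hfin, rfl, hi⟩
    have h2 : (g '' {i}ᶜ).ncard ≤ ({i}ᶜ : Set (Fin d)).ncard :=
      Set.ncard_image_le (Set.toFinite _)
    have h3 : ({i}ᶜ : Set (Fin d)).ncard = d - 1 := by
      have : ({i}ᶜ : Set (Fin d)) = Set.univ \ {i} := by simp [Set.compl_eq_univ_diff]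
      rw [this, Set.ncard_diff_singleton_of_mem (Set.mem_univ i), Set.ncard_univ]
      simp
    have hd1 : 0 < d := i.pos
    omega
  -- apply strong replacement
  obtain ⟨i, htop⟩ := h d g hirr x hx1
  -- project to the quotient
  let f := QuotientGroup.mk' N
  have hsurj : Function.Surjective f := QuotientGroup.mk'_surjective N
  have hmap : Subgroup.closure (f '' Set.range (Function.update g i x)) = ⊤ := by
    rw [← MonoidHom.map_closure, htop]
    exact Subgroup.map_top_of_surjective f hsurj
  have hrng : Set.range (Function.update g i x) = insert x (g '' {i}ᶜ) := by
    ext y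
    simp only [Set.mem_range, Set.mem_insert_iff, Set.mem_image, Set.mem_compl_iff,
      Set.mem_singleton_iff]
    constructor
    · rintro ⟨j, rfl⟩
      by_cases hj : j = i
      · subst hj; simp
      · right; exact ⟨j, hj, by simp [Function.update_of_ne hj]⟩
    · rintro (rfl | ⟨j, hj, rfl⟩)
      · exact ⟨i, by simp⟩
      · exact ⟨j, by simp [Function.update_of_ne hj]⟩
  have hfx : f x = 1 := (QuotientGroup.eq_one_iff x).mpr hxN
  set T : Set (G ⧸ N) := f '' (g '' {i}ᶜ) with hT
  have himg : f '' Set.range (Function.update g i x) = insert (1 : G ⧸ N) T := by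
    rw [hrng, Set.image_insert_eq, hfx]
  have hTgen : Subgroup.closure T = ⊤ := by
    have : Subgroup.closure (insert (1 : G ⧸ N) T) = Subgroup.closure T := by
      rw [Set.insert_eq, Subgroup.closure_union, Subgroup.closure_singleton_one, bot_sup_eq]
    rw [himg, this] at hmap
    exact hmap
  have hTfin : T.Finite := ((Set.finite_range g).subset (Set.image_subset_range _ _)).image f
  have hle : dGen (G ⧸ N) ≤ T.ncard := Nat.sInf_le ⟨T, hTfin, rfl, hTgen⟩
  have h2 : T.ncard ≤ (g '' {i}ᶜ).ncard :=
    Set.ncard_image_le ((Set.finite_range g).subset (Set.image_subset_range _ _))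
  have h3 : (g '' {i}ᶜ).ncard ≤ ({i}ᶜ : Set (Fin d)).ncard := Set.ncard_image_le (Set.toFinite _)
  have h4 : ({i}ᶜ : Set (Fin d)).ncard = d - 1 := by
    have : ({i}ᶜ : Set (Fin d)) = Set.univ \ {i} := by simp [Set.compl_eq_univ_diff]
    rw [this, Set.ncard_diff_singleton_of_mem (Set.mem_univ i), Set.ncard_univ]
    simp
  omega
end
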